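/- arXiv:2604.09093 — 9 statements merged into one kernel-verified Lean document; each statement's English description precedes it below -/
import Mathlib

section
/- Let G be a locally compact second countable group with left Haar measure m_G, and let f : G → [0,∞) be a measurable function satisfying f(gh) ≤ f(g)·f(h) for all g,h ∈ G. Then f is bounded on every compact subset of G. -/
open MeasureTheory Pointwise

/-- A measurable submultiplicative nonnegative function on a locally compact second
countable group is bounded on every compact set. -/
theorem stmt_0 {G : Type*} [Group G] [TopologicalSpace G] [IsTopologicalGroup G]
    [LocallyCompactSpace G] [SecondCountableTopology G]
    [MeasurableSpace G] [BorelSpace G]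
    (mG : Measure G) [mG.IsHaarMeasure]
    (f : G → ℝ) (hf_meas : Measurable f) (hf_nonneg : ∀ g, 0 ≤ f g)
    (hf_submul : ∀ g h : G, f (g * h) ≤ f g * f h)
    (K : Set G) (hK : IsCompact K) :
    ∃ M : ℝ, ∀ g ∈ K, f g ≤ M := by
  -- the sets F n cover G
  set F : ℕ → Set G := fun n => {g | f g ≤ n ∧ f g⁻¹ ≤ n} with hF
  have hFmeas : ∀ n, MeasurableSet (F n) := fun n =>
    (measurableSet_le hf_meas measurable_const).inter
      (measurableSet_le (hf_meas.comp measurable_inv) measurable_const)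
  have hcover : (Set.univ : Set G) = ⋃ n, F n := by
    ext g
    simp only [Set.mem_univ, Set.mem_iUnion, true_iff]
    obtain ⟨n, hn⟩ := exists_nat_ge (max (f g) (f g⁻¹))
    exact ⟨n, (le_max_left _ _).trans hn, (le_max_right _ _).trans hn⟩
  -- find n with positive measure
  obtain ⟨U, hUopen, hU1⟩ : ∃ U : Set G, IsOpen U ∧ (1 : G) ∈ U := ⟨Set.univ, isOpen_univ, trivial⟩
  have hUpos : 0 < mG U := hUopen.measure_pos mG ⟨1, hU1⟩
  have : ∃ n, 0 < mG (F n ∩ U) := by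
    by_contra h
    push_neg at h
    have : mG U = 0 := by
      have : U ⊆ ⋃ n, F n ∩ U := by
        intro x hx
        have : x ∈ ⋃ n, F n := by rw [← hcover]; trivial
        obtain ⟨n, hn⟩ := Set.mem_iUnion.mp this
        exact Set.mem_iUnion.mpr ⟨n, hn, hx⟩
      refine le_antisymm ?_ (zero_le (a := _))
      calc mG U ≤ mG (⋃ n, F n ∩ U) := measure_mono this
        _ ≤ ∑' n, mG (F n ∩ U) := measure_iUnion_le _
        _ = 0 := by simp [fun n => nonpos_iff_eq_zero.mp (h n)]
    exact hUpos.ne' this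
  obtain ⟨n, hn⟩ := this
  set E : Set G := F n ∩ U with hE
  have hEmeas : MeasurableSet E := (hFmeas n).inter hUopen.measurableSet
  -- Steinhaus: E / E is a neighborhood of 1
  have hnhds : E / E ∈ nhds (1 : G) := MeasureTheory.Measure.div_mem_nhds_one_of_haar_pos mG E hEmeas hn
  -- f is bounded by n^2 on E / E
  have hbound : ∀ x ∈ E / E, f x ≤ (n : ℝ) * n := by
    rintro x hx
    obtain ⟨a, ha, b, hb, rfl⟩ := hx
    have ha' := ha.1
    have hb' := hb.1
    calc f (a / b) = f (a * b⁻¹) := by rw [div_eq_mul_inv]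
      _ ≤ f a * f b⁻¹ := hf_submul a b⁻¹
      _ ≤ (n : ℝ) * n := mul_le_mul ha'.1 hb'.2 (hf_nonneg _) (Nat.cast_nonneg n)
  -- cover K by finitely many translates x • (E / E)
  have hnb : ∀ x ∈ K, x • (E / E) ∈ nhds x := fun x _ => by
    have := smul_mem_nhds_smul x hnhds
    simpa using this
  obtain ⟨t, htcover⟩ := hK.elim_nhds_subcover' (fun x _ => x • (E / E)) hnb
  refine ⟨∑ x ∈ t, f x * ((n : ℝ) * n), fun g hg => ?_⟩
  obtain ⟨x, hxt, hgx⟩ := Set.mem_iUnion₂.mp (htcover hg)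
  obtain ⟨y, hy, rfl⟩ := hgx
  calc f ((x : G) • y) = f ((x : G) * y) := rfl
    _ ≤ f x * f y := hf_submul _ _
    _ ≤ f x * ((n : ℝ) * n) := by
        exact mul_le_mul_of_nonneg_left (hbound y hy) (hf_nonneg _)
    _ ≤ ∑ z ∈ t, f z * ((n : ℝ) * n) :=
        Finset.single_le_sum
          (fun z _ => mul_nonneg (hf_nonneg _)
            (mul_nonneg (Nat.cast_nonneg n) (Nat.cast_nonneg n))) hxt
end

section
/- Let f : G → [0,∞) be a symmetric (f(g) = f(g⁻¹)) submultiplicative measurable function on a locally compact second countable group G. If E is a measurable subset of positive Haar measure on which f ≤ c, then f ≤ c² on the set E·E⁻¹, and E·E⁻¹ contains an open neighborhood of the identity; hence f is bounded on a neighborhood of the identity. -/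
open MeasureTheory
open scoped Pointwise

/-- For a symmetric submultiplicative measurable nonnegative function `f` and a measurable
set `E` of positive Haar measure with `f ≤ c` on `E`: `f ≤ c²` on `E·E⁻¹`, the set `E·E⁻¹`
is a neighborhood of the identity, and hence `f` is bounded on a neighborhood of `1`. -/
theorem stmt_1 {G : Type*} [Group G] [TopologicalSpace G] [IsTopologicalGroup G]
    [LocallyCompactSpace G] [SecondCountableTopology G]
    [MeasurableSpace G] [BorelSpace G]
    (mG : Measure G) [mG.IsHaarMeasure]
    (f : G → ℝ) (hf_meas : Measurable f) (hf_nonneg : ∀ g, 0 ≤ f g)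
    (hf_symm : ∀ g : G, f g⁻¹ = f g)
    (hf_submul : ∀ g h : G, f (g * h) ≤ f g * f h)
    (c : ℝ) (E : Set G) (hE : MeasurableSet E) (hEpos : 0 < mG E)
    (hfE : ∀ g ∈ E, f g ≤ c) :
    (∀ g ∈ E * E⁻¹, f g ≤ c ^ 2) ∧ E * E⁻¹ ∈ nhds (1 : G) ∧
      ∃ V ∈ nhds (1 : G), ∀ g ∈ V, f g ≤ c ^ 2 := by
  have hbound : ∀ g ∈ E * E⁻¹, f g ≤ c ^ 2 := by
    rintro g ⟨a, ha, b, hb, rfl⟩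
    rw [Set.mem_inv] at hb
    calc f (a * b) ≤ f a * f b := hf_submul a b
    _ = f a * f b⁻¹ := by rw [hf_symm]
    _ ≤ c * c := mul_le_mul (hfE a ha) (hfE b⁻¹ hb) (hf_nonneg b⁻¹)
        ((hf_nonneg a).trans (hfE a ha))
    _ = c ^ 2 := (sq c).symm
  have hnhds : E * E⁻¹ ∈ nhds (1 : G) := by
    rw [← div_eq_mul_inv]
    exact Measure.div_mem_nhds_one_of_haar_pos mG E hE hEpos
  exact ⟨hbound, hnhds, E * E⁻¹, hnhds, hbound⟩
end

section
/- Let (G,θ) be a measured group and g ∈ G a θ-suitable element, i.e. there exist R ≥ 1, integers k, k_1,…,k_R ≥ 0 and constants α_1,…,α_R > 0 such that gθ^{∗k} ≤ Σ_{r=1}^R α_r · θ^{∗k_r} as measures (with θ^{∗0} = δ_e). Then for every positive θ-harmonic function u with u(e)=1 one has u(g) ≤ Σ_{r=1}^R α_r; hence 𝔪_θ(g) ≤ Σ_r α_r < ∞. -/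
open MeasureTheory ENNReal

/-- `u` is `θ`-harmonic: `u ∗ θ = u`, i.e. `∫ u(g h) dθ(h) = u(g)` for all `g`. -/
def IsHarmonic {G : Type*} [Group G] [MeasurableSpace G] (θ : Measure G) (u : G → ℝ) : Prop :=
  ∀ g : G, ∫ h, u (g * h) ∂θ = u g

/-- The normalized cone `ℍ(G,θ)` of positive measurable `θ`-harmonic functions `u` with
`u(e) = 1`. -/
def harmCone {G : Type*} [Group G] [MeasurableSpace G] (θ : Measure G) : Set (G → ℝ) :=
  {u | Measurable u ∧ (∀ g, 0 < u g) ∧ IsHarmonic θ u ∧ u 1 = 1}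

/-- The harmonic majorant `𝔪_θ(g) = sup{u(g) : u ∈ ℍ(G,θ)}`, with values in `[1,∞]`. -/
noncomputable def majorant {G : Type*} [Group G] [MeasurableSpace G] (θ : Measure G)
    (g : G) : ℝ≥0∞ :=
  ⨆ u ∈ harmCone θ, ENNReal.ofReal (u g)

/-- `θ` is admissible with respect to the Haar measure `mG`: it is absolutely continuous
with respect to the Haar measure class, and it is not supported on a proper closed
subsemigroup of `G`. -/
def IsAdmissible {G : Type*} [Group G] [TopologicalSpace G] [MeasurableSpace G]
    (mG θ : Measure G) : Prop :=
  θ ≪ mG ∧ ∀ S : Set G, IsClosed S → (∀ a ∈ S, ∀ b ∈ S, a * b ∈ S) → θ Sᶜ = 0 →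
    S = Set.univ


/-- The `n`-fold convolution power `θ^{∗n}`, with `θ^{∗0} = δ_e`. -/
noncomputable def convPow {G : Type*} [Monoid G] [MeasurableSpace G] (θ : Measure G) :
    ℕ → Measure G
  | 0 => Measure.dirac 1
  | n + 1 => ((convPow θ n).prod θ).map fun p => p.1 * p.2

lemma one_step {G : Type*} [Group G] [TopologicalSpace G] [IsTopologicalGroup G]
    [SecondCountableTopology G] [MeasurableSpace G] [BorelSpace G]
    (θ : Measure G) [IsProbabilityMeasure θ] {u : G → ℝ}
    (hu : u ∈ harmCone θ) (a : G) :
    ∫⁻ h, ENNReal.ofReal (u (a * h)) ∂θ = ENNReal.ofReal (u a) := by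
  obtain ⟨hm, hpos, hharm, _⟩ := hu
  have hint : Integrable (fun h => u (a * h)) θ := by
    by_contra h
    have := integral_undef h
    rw [hharm a] at this
    exact (hpos a).ne' this
  rw [← ofReal_integral_eq_lintegral_ofReal hint
    (Filter.Eventually.of_forall fun x => (hpos _).le), hharm a]

lemma convPow_step {G : Type*} [Group G] [TopologicalSpace G] [IsTopologicalGroup G]
    [SecondCountableTopology G] [MeasurableSpace G] [BorelSpace G]
    (θ : Measure G) [IsProbabilityMeasure θ] {u : G → ℝ}
    (hu : u ∈ harmCone θ) (n : ℕ) (a : G) :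
    ∫⁻ h, ENNReal.ofReal (u (a * h)) ∂(convPow θ n) = ENNReal.ofReal (u a) := by
  induction n generalizing a with
  | zero =>
    have : Measurable fun h : G => ENNReal.ofReal (u (a * h)) :=
      (ENNReal.measurable_ofReal.comp hu.1).comp (measurable_const_mul a)
    rw [show convPow θ 0 = Measure.dirac 1 from rfl, lintegral_dirac' _ this, mul_one]
  | succ n ih =>
    have hmul : Measurable fun p : G × G => p.1 * p.2 :=
      measurable_fst.mul measurable_snd
    have hf : Measurable fun x : G => ENNReal.ofReal (u (a * x)) :=
      (ENNReal.measurable_ofReal.comp hu.1).comp (measurable_const_mul a)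
    have hf2 : Measurable fun p : G × G => ENNReal.ofReal (u (a * (p.1 * p.2))) := by
      exact hf.comp hmul
    rw [convPow, lintegral_map hf hmul, lintegral_prod _ hf2.aemeasurable]
    calc ∫⁻ x, ∫⁻ y, ENNReal.ofReal (u (a * (x * y))) ∂θ ∂(convPow θ n)
        = ∫⁻ x, ENNReal.ofReal (u (a * x)) ∂(convPow θ n) := by
          refine lintegral_congr fun x => ?_
          simpa [mul_assoc] using one_step θ hu (a * x)
      _ = ENNReal.ofReal (u a) := ih a

/-- If `g` is `θ`-suitable, i.e. `gθ^{∗k} ≤ Σ_r α_r θ^{∗k_r}` as measures for some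
`R ≥ 1`, `k, k_1, …, k_R ≥ 0` and `α_1, …, α_R > 0`, then `u(g) ≤ Σ_r α_r` for every
positive `θ`-harmonic `u` with `u(e) = 1`; hence `𝔪_θ(g) ≤ Σ_r α_r < ∞`. -/
theorem stmt_4 {G : Type*} [Group G] [TopologicalSpace G] [IsTopologicalGroup G]
    [LocallyCompactSpace G] [SecondCountableTopology G]
    [MeasurableSpace G] [BorelSpace G]
    (mG : Measure G) [mG.IsHaarMeasure]
    (θ : Measure G) [IsProbabilityMeasure θ]
    (g : G) (R : ℕ) (hR : 1 ≤ R) (k : ℕ) (ks : Fin R → ℕ) (α : Fin R → ℝ)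
    (hα : ∀ r, 0 < α r)
    (hsuit : (convPow θ k).map (fun x => g * x) ≤
      ∑ r : Fin R, ENNReal.ofReal (α r) • convPow θ (ks r)) :
    (∀ u ∈ harmCone θ, u g ≤ ∑ r : Fin R, α r) ∧
      majorant θ g ≤ ENNReal.ofReal (∑ r : Fin R, α r) := by
  have key : ∀ u ∈ harmCone θ, u g ≤ ∑ r : Fin R, α r := by
    intro u hu
    have hf : Measurable fun x : G => ENNReal.ofReal (u x) :=
      ENNReal.measurable_ofReal.comp hu.1
    have h1 : ∫⁻ x, ENNReal.ofReal (u x) ∂((convPow θ k).map (fun x => g * x))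
        = ENNReal.ofReal (u g) := by
      rw [lintegral_map hf (measurable_const_mul g)]
      exact convPow_step θ hu k g
    have h2 : ∫⁻ x, ENNReal.ofReal (u x)
        ∂(∑ r : Fin R, ENNReal.ofReal (α r) • convPow θ (ks r))
        = ∑ r : Fin R, ENNReal.ofReal (α r) := by
      rw [lintegral_finset_sum_measure]
      refine Finset.sum_congr rfl fun r _ => ?_
      rw [lintegral_smul_measure]
      have := convPow_step θ hu (ks r) 1
      simp only [one_mul] at this
      rw [this, hu.2.2.2]
      simp
    have hle : ENNReal.ofReal (u g) ≤ ENNReal.ofReal (∑ r : Fin R, α r) := by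
      rw [← h1, ENNReal.ofReal_sum_of_nonneg fun r _ => (hα r).le, ← h2]
      exact lintegral_mono' hsuit le_rfl
    exact (ENNReal.ofReal_le_ofReal_iff
      (Finset.sum_nonneg fun r _ => (hα r).le)).mp hle
  refine ⟨key, ?_⟩
  exact iSup₂_le fun u hu => ENNReal.ofReal_le_ofReal (key u hu)
end

section
/- Let (X,μ) be a stationary (G,θ)-space. Then for every g ∈ G, the Radon–Nikodym derivative satisfies 𝔪_θ(g⁻¹)⁻¹ ≤ (dgμ/dμ)(x) ≤ 𝔪_θ(g) for μ-almost every x ∈ X, where 𝔪_θ is the harmonic majorant of (G,θ). -/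
open MeasureTheory ENNReal

/-- The constant function `1` lies in the harmonic cone, hence `majorant θ c ≠ 0`. -/
lemma majorant_ne_zero {G : Type*} [Group G] [MeasurableSpace G] (θ : Measure G)
    [IsProbabilityMeasure θ] (c : G) : majorant θ c ≠ 0 := by
  have h1 : (fun _ : G => (1 : ℝ)) ∈ harmCone θ := by
    refine ⟨measurable_const, fun _ => one_pos, fun g => ?_, rfl⟩
    simp
  have : (1 : ℝ≥0∞) ≤ majorant θ c := by
    have := le_iSup₂ (f := fun v (_ : v ∈ harmCone θ) => ENNReal.ofReal (v c))
      (fun _ : G => (1 : ℝ)) h1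
    unfold majorant
    simpa using this
  exact fun h => by simp [h] at this

/-- Key lemma: `μ(c⁻¹ A) ≤ 𝔪_θ(c) μ(A)`. -/
lemma key_ineq {G X : Type*} [Group G] [MeasurableSpace G]
    [MeasurableSpace X] [MulAction G X]
    (θ : Measure G) [IsProbabilityMeasure θ]
    (hact : Measurable fun p : G × X => p.1 • p.2)
    (hmul : ∀ h0 : G, Measurable (h0 * · : G → G))
    (μ : Measure X) [IsProbabilityMeasure μ]
    (hstat : ∀ s : Set X, MeasurableSet s → ∫⁻ g, μ.map (g • · : X → X) s ∂θ = μ s)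
    (hqi : ∀ g : G, μ.map (g • · : X → X) ≪ μ)
    (c : G) (A : Set X) (hA : MeasurableSet A) :
    μ ((c • · : X → X) ⁻¹' A) ≤ majorant θ c * μ A := by
  have smul_meas : ∀ h : G, Measurable (h • · : X → X) := fun h =>
    hact.comp (measurable_const.prodMk measurable_id)
  by_cases hA0 : μ A = 0
  · have : μ.map (c • · : X → X) A = 0 := hqi c hA0
    rw [Measure.map_apply (smul_meas c) hA] at this
    simp [this]
  -- positivity of all translates
  have hpos : ∀ h : G, μ ((h • · : X → X) ⁻¹' A) ≠ 0 := by
    intro h hzero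
    apply hA0
    have := hqi h⁻¹ hzero
    rw [Measure.map_apply (smul_meas h⁻¹) ((smul_meas h) hA)] at this
    have hset : (h⁻¹ • · : X → X) ⁻¹' ((h • · : X → X) ⁻¹' A) = A := by
      ext x; simp [smul_smul]
    rwa [hset] at this
  have hfin : ∀ B : Set X, μ B ≠ ∞ := fun B => (measure_lt_top μ B).ne
  set u : G → ℝ := fun h => (μ ((h • · : X → X) ⁻¹' A)).toReal / (μ A).toReal with hu_def
  have hAtop : (0 : ℝ) < (μ A).toReal := ENNReal.toReal_pos hA0 (hfin A)
  -- measurability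
  have hmeas_enn : Measurable fun h : G => μ ((h • · : X → X) ⁻¹' A) := by
    have : ∀ h : G, μ ((h • · : X → X) ⁻¹' A) = ∫⁻ x, A.indicator 1 (h • x) ∂μ := by
      intro h
      rw [← lintegral_indicator_one ((smul_meas h) hA)]
      congr 1
    simp_rw [this]
    exact Measurable.lintegral_prod_right ((measurable_one.indicator hA).comp hact)
  have humem : u ∈ harmCone θ := by
    refine ⟨(hmeas_enn.ennreal_toReal).div measurable_const, ?_, ?_, ?_⟩
    · intro h
      exact div_pos (ENNReal.toReal_pos (hpos h) (hfin _)) hAtop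
    · -- harmonicity
      intro h0
      have hset : ∀ h : G, (h • · : X → X) ⁻¹' ((h0 • · : X → X) ⁻¹' A)
          = ((h0 * h) • · : X → X) ⁻¹' A := by
        intro h; ext x; simp [mul_smul]
      have hpre : MeasurableSet ((h0 • · : X → X) ⁻¹' A) := (smul_meas h0) hA
      have hstat' : ∫⁻ h, μ (((h0 * h) • · : X → X) ⁻¹' A) ∂θ
          = μ ((h0 • · : X → X) ⁻¹' A) := by
        rw [← hstat _ hpre]
        refine lintegral_congr fun h => ?_
        rw [Measure.map_apply (smul_meas h) hpre, hset h]
      have hmeas' : AEMeasurable (fun h : G => μ (((h0 * h) • · : X → X) ⁻¹' A)) θ :=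
        (hmeas_enn.comp (hmul h0)).aemeasurable
      have hlt : ∀ᵐ h ∂θ, μ (((h0 * h) • · : X → X) ⁻¹' A) < ∞ :=
        Filter.Eventually.of_forall fun h => measure_lt_top μ _
      have hint : ∫ h, (μ (((h0 * h) • · : X → X) ⁻¹' A)).toReal ∂θ
          = (μ ((h0 • · : X → X) ⁻¹' A)).toReal := by
        rw [integral_toReal hmeas' hlt, hstat']
      calc ∫ h, u (h0 * h) ∂θ
          = (∫ h, (μ (((h0 * h) • · : X → X) ⁻¹' A)).toReal ∂θ) / (μ A).toReal := by
            rw [← integral_div]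
        _ = u h0 := by rw [hint]
    · -- normalization
      have : ((1 : G) • · : X → X) ⁻¹' A = A := by ext x; simp
      simp only [hu_def, this]
      exact div_self hAtop.ne'
  -- conclude
  have hle : ENNReal.ofReal (u c) ≤ majorant θ c :=
    le_iSup₂ (f := fun v (_ : v ∈ harmCone θ) => ENNReal.ofReal (v c)) u humem
  have heq : ENNReal.ofReal (u c) = μ ((c • · : X → X) ⁻¹' A) / μ A := by
    rw [hu_def]
    rw [ENNReal.ofReal_div_of_pos hAtop, ENNReal.ofReal_toReal (hfin _),
      ENNReal.ofReal_toReal (hfin A)]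
  rw [heq] at hle
  exact (ENNReal.div_le_iff_le_mul (Or.inl hA0) (Or.inl (hfin A))).1 hle

/-- For a stationary `(G,θ)`-space `(X,μ)` and every `g ∈ G`, the Radon–Nikodym
derivative satisfies `𝔪_θ(g⁻¹)⁻¹ ≤ d(gμ)/dμ ≤ 𝔪_θ(g)` almost everywhere. -/
theorem stmt_6 {G X : Type*} [Group G] [TopologicalSpace G] [IsTopologicalGroup G]
    [LocallyCompactSpace G] [SecondCountableTopology G]
    [MeasurableSpace G] [BorelSpace G]
    [MeasurableSpace X] [StandardBorelSpace X]
    (mG : Measure G) [mG.IsHaarMeasure]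
    (θ : Measure G) [IsProbabilityMeasure θ] (hadm : IsAdmissible mG θ)
    [MulAction G X] (hact : Measurable fun p : G × X => p.1 • p.2)
    (μ : Measure X) [IsProbabilityMeasure μ]
    (hstat : ∀ s : Set X, MeasurableSet s → ∫⁻ g, μ.map (g • · : X → X) s ∂θ = μ s)
    (hqi : ∀ g : G, μ.map (g • · : X → X) ≪ μ)
    (g : G) :
    ∀ᵐ x ∂μ, (majorant θ g⁻¹)⁻¹ ≤ (μ.map (g • · : X → X)).rnDeriv μ x ∧
      (μ.map (g • · : X → X)).rnDeriv μ x ≤ majorant θ g := by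
  have smul_meas : ∀ h : G, Measurable (h • · : X → X) := fun h =>
    hact.comp (measurable_const.prodMk measurable_id)
  set ν := μ.map (g • · : X → X) with hν
  haveI : IsProbabilityMeasure ν := Measure.isProbabilityMeasure_map (smul_meas g).aemeasurable
  have hνs : ∀ s : Set X, MeasurableSet s → ν s = μ ((g • · : X → X) ⁻¹' s) := fun s hs =>
    Measure.map_apply (smul_meas g) hs
  have hrn : ∀ s : Set X, MeasurableSet s → ∫⁻ x in s, ν.rnDeriv μ x ∂μ = ν s := fun s hs =>
    Measure.setLIntegral_rnDeriv' (hqi g) hs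
  have upper : ∀ᵐ x ∂μ, ν.rnDeriv μ x ≤ majorant θ g := by
    apply ae_le_of_forall_setLIntegral_le_of_sigmaFinite (Measure.measurable_rnDeriv ν μ)
    intro s hs _
    rw [hrn s hs, hνs s hs, setLIntegral_const]
    exact key_ineq θ hact (fun h0 => measurable_const_mul h0) μ hstat hqi g s hs
  have lower : ∀ᵐ x ∂μ, (majorant θ g⁻¹)⁻¹ ≤ ν.rnDeriv μ x := by
    apply ae_le_of_forall_setLIntegral_le_of_sigmaFinite measurable_const
    intro s hs _
    rw [hrn s hs, hνs s hs, setLIntegral_const]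
    by_cases htop : majorant θ g⁻¹ = ∞
    · simp [htop]
    have hkey := key_ineq θ hact (fun h0 => measurable_const_mul h0) μ hstat hqi g⁻¹ ((g • · : X → X) ⁻¹' s) ((smul_meas g) hs)
    have hset : (g⁻¹ • · : X → X) ⁻¹' ((g • · : X → X) ⁻¹' s) = s := by
      ext x; simp [smul_smul]
    rw [hset] at hkey
    calc (majorant θ g⁻¹)⁻¹ * μ s
        ≤ (majorant θ g⁻¹)⁻¹ * (majorant θ g⁻¹ * μ ((g • · : X → X) ⁻¹' s)) :=
          mul_le_mul_right hkey _
      _ = μ ((g • · : X → X) ⁻¹' s) := by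
          rw [← mul_assoc, ENNReal.inv_mul_cancel (majorant_ne_zero θ g⁻¹) htop, one_mul]
  filter_upwards [upper, lower] with x h1 h2 using ⟨h2, h1⟩
end

section
/- Let (G,θ) be a noncompact measured group, (Ω,ℙ) = (G^ℕ, θ^{⊗ℕ}), and z_n(ω) = ω_0ω_1⋯ω_{n-1} the right random walk. Then for every compact subset C of G, ℙ(liminf_{n→∞} {z_n ∈ C}) = 0; that is, almost surely the random walk does not eventually stay in C. -/
open MeasureTheory ENNReal

open Pointwise

private lemma listProd_nhds {G : Type*} [Group G] [TopologicalSpace G] [IsTopologicalGroup G] :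
    ∀ (l : List G) (W : Set G), IsOpen W → l.prod ∈ W →
      ∃ Us : List (Set G), List.Forall₂ (· ∈ ·) l Us ∧ (∀ U ∈ Us, IsOpen U) ∧
        ∀ xs : List G, List.Forall₂ (· ∈ ·) xs Us → xs.prod ∈ W
  | [], W, _, hp => ⟨[], List.Forall₂.nil, by simp, by
      intro xs hxs; cases hxs; simpa using hp⟩
  | a :: t, W, hW, hp => by
      have hc : ContinuousAt (fun p : G × G => p.1 * p.2) (a, t.prod) :=
        continuous_mul.continuousAt
      have hW' : W ∈ nhds (a * t.prod) := hW.mem_nhds (by simpa using hp)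
      have hpre : (fun p : G × G => p.1 * p.2) ⁻¹' W ∈ nhds a ×ˢ nhds t.prod := by
        rw [← nhds_prod_eq]; exact hc.preimage_mem_nhds hW'
      obtain ⟨A, hA, V, hV, hAV⟩ := Filter.mem_prod_iff.1 hpre
      obtain ⟨A', hA'sub, hA'open, haA'⟩ := mem_nhds_iff.1 hA
      obtain ⟨V', hV'sub, hV'open, hbV'⟩ := mem_nhds_iff.1 hV
      obtain ⟨Us, hf, hop, hprod⟩ := listProd_nhds t V' hV'open hbV'
      refine ⟨A' :: Us, List.Forall₂.cons haA' hf, ?_, ?_⟩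
      · intro U hU
        rcases List.mem_cons.1 hU with rfl | hU
        exacts [hA'open, hop U hU]
      · intro xs hxs
        cases hxs with
        | cons hx hxs' =>
          rename_i x xs'
          have : (x, xs'.prod) ∈ A ×ˢ V :=
            ⟨hA'sub hx, hV'sub (hprod _ hxs')⟩
          simpa [List.prod_cons] using hAV this

/-- For the right random walk `z_n = ω_0 ω_1 ⋯ ω_{n-1}` driven by an admissible measure
`θ` on a noncompact lcsc group `G`, and any compact `C ⊆ G`, almost surely the walk does
not eventually stay in `C`: `ℙ(liminf {z_n ∈ C}) = 0`. -/
theorem stmt_7 {G : Type*} [Group G] [TopologicalSpace G] [IsTopologicalGroup G]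
    [LocallyCompactSpace G] [SecondCountableTopology G] [NoncompactSpace G]
    [MeasurableSpace G] [BorelSpace G]
    (mG : Measure G) [mG.IsHaarMeasure]
    (θ : Measure G) [IsProbabilityMeasure θ] (hadm : IsAdmissible mG θ)
    (P : Measure (ℕ → G)) [IsProbabilityMeasure P]
    (hiid : ∀ (n : ℕ) (s : ℕ → Set G), (∀ i, MeasurableSet (s i)) →
      P {ω | ∀ i < n, ω i ∈ s i} = ∏ i ∈ Finset.range n, θ (s i))
    (C : Set G) (hC : IsCompact C) :
    P (Filter.atTop.liminf fun n : ℕ =>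
        {ω : ℕ → G | ((List.range n).map ω).prod ∈ C}) = 0 := by
  classical
  -- the "support" of θ
  set D : Set G := {g : G | ∀ U : Set G, IsOpen U → g ∈ U → 0 < θ U} with hDdef
  have hDc : θ Dᶜ = 0 := by
    apply measure_null_of_locally_null
    intro x hx
    simp only [hDdef, Set.mem_compl_iff, Set.mem_setOf_eq] at hx
    push_neg at hx
    obtain ⟨U, hUo, hxU, hU0⟩ := hx
    exact ⟨U, mem_nhdsWithin_of_mem_nhds (hUo.mem_nhds hxU),
      le_antisymm hU0 zero_le⟩
  set T : Subsemigroup G := Subsemigroup.closure D with hTdef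
  have hDT : D ⊆ (T.topologicalClosure : Set G) := fun x hx => by
    rw [Subsemigroup.coe_topologicalClosure]
    exact subset_closure (Subsemigroup.subset_closure hx)
  have hSuniv : (T.topologicalClosure : Set G) = Set.univ := by
    apply hadm.2
    · rw [Subsemigroup.coe_topologicalClosure]; exact isClosed_closure
    · intro a ha b hb; exact T.topologicalClosure.mul_mem ha hb
    · exact measure_mono_null (fun x hx hxD => hx (hDT hxD)) hDc
  have hdense : Dense (T : Set G) := by
    rw [dense_iff_closure_eq, ← Subsemigroup.coe_topologicalClosure]
    exact hSuniv
  -- a product of support elements outside closure (C⁻¹ * C)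
  obtain ⟨V, hVc, hV1⟩ := exists_compact_mem_nhds (1 : G)
  set K : Set G := C⁻¹ * C with hKdef
  have hKc : IsCompact K := hC.inv.mul hC
  have hclK : closure K ⊆ K * V := by
    intro x hx
    have hVinv : V⁻¹ ∈ nhds (1 : G) := inv_mem_nhds_one G hV1
    have h1 : x • V⁻¹ ∈ nhds x := by
      simpa using smul_mem_nhds_smul x hVinv
    obtain ⟨y, hy1, hyK⟩ := mem_closure_iff_nhds.1 hx _ h1
    obtain ⟨v, hv, hxv⟩ := hy1
    have : x = y * v⁻¹ := by
      rw [← hxv]; simp [smul_eq_mul]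
    rw [this]
    exact Set.mul_mem_mul hyK (by simpa using hv)
  have hne : ∃ w, w ∉ K * V := by
    by_contra h
    push_neg at h
    exact (hKc.mul hVc).ne_univ (Set.eq_univ_of_forall h)
  obtain ⟨w, hw⟩ := hne
  set W : Set G := (closure K)ᶜ with hWdef
  have hWopen : IsOpen W := isClosed_closure.isOpen_compl
  have hwW : w ∈ W := fun hwc => hw (hclK hwc)
  obtain ⟨t, htT, htW⟩ := hdense.exists_mem_open hWopen ⟨w, hwW⟩
  -- t is a product of a nonempty list of support elements
  have hlist : ∃ l : List G, l ≠ [] ∧ (∀ y ∈ l, y ∈ D) ∧ l.prod = t := by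
    refine Subsemigroup.closure_induction
      (p := fun x _ => ∃ l : List G, l ≠ [] ∧ (∀ y ∈ l, y ∈ D) ∧ l.prod = x)
      (fun x hx => ⟨[x], by simp, by simpa using hx, by simp⟩)
      (fun x y _ _ hx hy => ?_) htT
    obtain ⟨lx, hlx0, hlxD, hlxp⟩ := hx
    obtain ⟨ly, hly0, hlyD, hlyp⟩ := hy
    refine ⟨lx ++ ly, by simp [hlx0], ?_, by rw [List.prod_append, hlxp, hlyp]⟩
    intro z hz
    rcases List.mem_append.1 hz with h | h
    exacts [hlxD z h, hlyD z h]
  obtain ⟨l, hl0, hlD, hlp⟩ := hlist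
  obtain ⟨Us, hf, hUsopen, hprodW⟩ := listProd_nhds l W hWopen (hlp ▸ htW)
  set m : ℕ := l.length with hmdef
  have hm : 0 < m := List.length_pos_iff.2 hl0
  have hlen : l.length = Us.length := hf.length_eq
  -- the open sets as a function
  set U : ℕ → Set G := fun j => if h : j < Us.length then Us.get ⟨j, h⟩ else Set.univ
    with hUdef
  have hUeq : ∀ (j : ℕ) (h : j < Us.length), U j = Us.get ⟨j, h⟩ := fun j h => dif_pos h
  have hUopen : ∀ j, IsOpen (U j) := by
    intro j
    by_cases h : j < Us.length
    · rw [hUeq j h]; exact hUsopen _ (Us.get_mem _)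
    · simp [hUdef, h, isOpen_univ]
  have hUmeas : ∀ j, MeasurableSet (U j) := fun j => (hUopen j).measurableSet
  have hUpos : ∀ j, j < m → 0 < θ (U j) := by
    intro j hj
    have hj' : j < Us.length := hlen ▸ hj
    have hmem : l.get ⟨j, hj⟩ ∈ Us.get ⟨j, hj'⟩ :=
      (List.forall₂_iff_get.1 hf).2 j hj hj'
    have hD' : l.get ⟨j, hj⟩ ∈ D := hlD _ (l.get_mem _)
    rw [hUeq j hj']
    exact hD' _ (hUsopen _ (Us.get_mem _)) hmem
  set p : ℝ≥0∞ := ∏ j ∈ Finset.range m, θ (U j) with hpdef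
  have hp0 : p ≠ 0 := by
    rw [hpdef]
    refine (Finset.prod_ne_zero_iff).2 fun j hj => ?_
    exact (hUpos j (Finset.mem_range.1 hj)).ne'
  -- the block events
  set B : ℕ → Set (ℕ → G) := fun k => {ω | ∀ j, j < m → ω (k * m + j) ∈ U j} with hBdef
  have hBmeas : ∀ k, MeasurableSet (B k) := by
    intro k
    have : B k = ⋂ (j : ℕ), ⋂ (_ : j < m), (fun ω : ℕ → G => ω (k * m + j)) ⁻¹' U j := by
      ext ω; simp [hBdef]
    rw [this]
    exact MeasurableSet.iInter fun j => MeasurableSet.iInter fun _ =>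
      (measurable_pi_apply _) (hUmeas j)
  -- key product formula
  have hkey : ∀ F : Finset ℕ, P (⋂ k ∈ F, B k) = ∏ _k ∈ F, p := by
    intro F
    obtain ⟨N, hFN⟩ : ∃ N, F ⊆ Finset.range N :=
      ⟨(F.sup id) + 1, fun k hk =>
        Finset.mem_range.2 (Nat.lt_succ_of_le (Finset.le_sup (f := id) hk))⟩
    set sfun : ℕ → Set G := fun i => if i / m ∈ F then U (i % m) else Set.univ with hsdef
    have hsmeas : ∀ i, MeasurableSet (sfun i) := by
      intro i
      by_cases h : i / m ∈ F <;> simp [hsdef, h, hUmeas]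
    have hdiv : ∀ (k j : ℕ), j < m → (k * m + j) / m = k := by
      intro k j hj
      rw [mul_comm, Nat.mul_add_div hm, Nat.div_eq_of_lt hj, add_zero]
    have hmod : ∀ (k j : ℕ), j < m → (k * m + j) % m = j := by
      intro k j hj
      rw [mul_comm, Nat.mul_add_mod, Nat.mod_eq_of_lt hj]
    have hset : {ω : ℕ → G | ∀ i < N * m, ω i ∈ sfun i} = ⋂ k ∈ F, B k := by
      ext ω
      simp only [Set.mem_setOf_eq, Set.mem_iInter]
      constructor
      · intro h k hk j hj
        have hkN : k < N := Finset.mem_range.1 (hFN hk)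
        have hi : k * m + j < N * m := by
          calc k * m + j < k * m + m := Nat.add_lt_add_left hj _
          _ = (k + 1) * m := by ring
          _ ≤ N * m := Nat.mul_le_mul_right m hkN
        have := h _ hi
        rw [hsdef] at this
        simpa [hdiv k j hj, hmod k j hj, hk] using this
      · intro h i hi
        by_cases hiF : i / m ∈ F
        · have hmlt : i % m < m := Nat.mod_lt _ hm
          have hmem := h _ hiF (i % m) hmlt
          have heq : (i / m) * m + i % m = i := by
            rw [mul_comm]; exact Nat.div_add_mod i m
          rw [heq] at hmem
          simpa [hsdef, hiF] using hmem
        · simp [hsdef, hiF]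
    rw [← hset, hiid _ _ hsmeas]
    have hprodN : ∀ M : ℕ, ∏ i ∈ Finset.range (M * m), θ (sfun i)
        = ∏ k ∈ Finset.range M, (if k ∈ F then p else 1) := by
      intro M
      induction M with
      | zero => simp
      | succ M ih =>
        rw [Nat.succ_mul, Finset.prod_range_add, ih, Finset.prod_range_succ]
        congr 1
        have hterm : ∀ j, j < m → sfun (M * m + j) = if M ∈ F then U j else Set.univ := by
          intro j hj
          simp [hsdef, hdiv M j hj, hmod M j hj]
        by_cases hMF : M ∈ F
        · rw [if_pos hMF, hpdef]
          refine Finset.prod_congr rfl fun j hj => ?_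
          rw [hterm j (Finset.mem_range.1 hj), if_pos hMF]
        · rw [if_neg hMF]
          refine Finset.prod_eq_one fun j hj => ?_
          rw [hterm j (Finset.mem_range.1 hj), if_neg hMF]
          exact measure_univ
    rw [hprodN N, Finset.prod_ite_mem, Finset.inter_eq_right.2 hFN]
  have hPB : ∀ k, P (B k) = p := by
    intro k
    have := hkey {k}
    simpa using this
  have hindep : ProbabilityTheory.iIndepSet B P := by
    refine (ProbabilityTheory.iIndepSet_iff_meas_biInter hBmeas).2 fun F => ?_
    rw [hkey F]
    exact Finset.prod_congr rfl fun k _ => (hPB k).symm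
  have hsum : (∑' n, P (B n)) = ⊤ := by
    simp only [hPB]
    exact ENNReal.tsum_const_eq_top_of_ne_zero hp0
  have hlimsup : P (Filter.limsup B Filter.atTop) = 1 :=
    ProbabilityTheory.measure_limsup_eq_one hBmeas hindep hsum
  -- the liminf event is contained in the complement of limsup B
  have hsubset : (Filter.atTop.liminf fun n : ℕ =>
      {ω : ℕ → G | ((List.range n).map ω).prod ∈ C}) ⊆ (Filter.limsup B Filter.atTop)ᶜ := by
    intro ω hω hωB
    rw [Filter.liminf_eq_iSup_iInf_of_nat] at hω
    rw [Filter.limsup_eq_iInf_iSup_of_nat] at hωB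
    simp only [Set.iSup_eq_iUnion, Set.iInf_eq_iInter, Set.mem_iUnion, Set.mem_iInter,
      Set.mem_setOf_eq] at hω hωB
    obtain ⟨N, hN⟩ := hω
    obtain ⟨k, hkN, hkB⟩ := hωB N
    have hkm : N ≤ k * m := le_trans hkN (Nat.le_mul_of_pos_right k hm)
    have h1 : ((List.range (k * m)).map ω).prod ∈ C := hN _ hkm
    have h2 : ((List.range (k * m + m)).map ω).prod ∈ C := hN _ (le_trans hkm (Nat.le_add_right _ _))
    have hdecomp : ((List.range (k * m + m)).map ω).prod
        = ((List.range (k * m)).map ω).prod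
          * ((List.range m).map fun j => ω (k * m + j)).prod := by
      rw [List.range_add, List.map_append, List.prod_append, List.map_map]
      rfl
    set b : G := ((List.range m).map fun j => ω (k * m + j)).prod with hbdef
    have hbW : b ∈ W := by
      apply hprodW
      rw [List.forall₂_iff_get]
      constructor
      · simpa using hlen
      · intro i h₁ h₂
        have him : i < m := by simpa using h₁
        have hget : ((List.range m).map fun j => ω (k * m + j)).get ⟨i, h₁⟩
            = ω (k * m + i) := by
          simp
        rw [hget, ← hUeq i h₂]
        exact hkB i him
    have hbK : b ∈ K := by
      have hb : b = (((List.range (k * m)).map ω).prod)⁻¹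
          * ((List.range (k * m + m)).map ω).prod := by
        rw [hdecomp, hbdef]; group
      rw [hb, hKdef]
      exact Set.mul_mem_mul (Set.inv_mem_inv.2 h1) h2
    exact hbW (subset_closure hbK)
  have hMeas : MeasurableSet (Filter.limsup B Filter.atTop) := by
    have : Filter.limsup B Filter.atTop = ⋂ n, ⋃ i, ⋃ (_ : i ≥ n), B i := by
      rw [Filter.limsup_eq_iInf_iSup_of_nat]
      simp only [Set.iSup_eq_iUnion, Set.iInf_eq_iInter]
    rw [this]
    exact MeasurableSet.iInter fun n => MeasurableSet.iUnion fun i =>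
      MeasurableSet.iUnion fun _ => hBmeas i
  have hcompl : P ((Filter.limsup B Filter.atTop)ᶜ) = 0 := by
    rw [measure_compl hMeas (measure_ne_top _ _), hlimsup, measure_univ, tsub_self]
  exact le_antisymm (le_trans (measure_mono hsubset) (le_of_eq hcompl)) zero_le
end

section
/- Let (X,μ) be a stationary (G,θ)-space, T_θ : L^∞(μ) → L^∞(μ) the Markov operator T_θ f(x) = ∫_G f(g.x) dθ(g). For f ∈ L^∞(μ), if T_θ f = f then f is G-invariant (gf = f μ-a.e. for every g ∈ G); the converse is immediate. -/
open MeasureTheory ENNReal Pointwise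

lemma integrable_of_bdd' {α : Type*} [MeasurableSpace α] {ν : Measure α} [IsFiniteMeasure ν]
    {h : α → ℝ} (hm : AEStronglyMeasurable h ν) {D : ℝ} (hb : ∀ a, |h a| ≤ D) :
    Integrable h ν :=
  ⟨hm, HasFiniteIntegral.of_bounded (C := D)
    (Filter.Eventually.of_forall fun a => by rw [Real.norm_eq_abs]; exact hb a)⟩

/-- For `f ∈ L^∞(μ)` of a stationary `(G,θ)`-space, `T_θ f = f` (μ-a.e.) holds if and
only if `f` is `G`-invariant. -/
theorem stmt_9 {G X : Type*} [Group G] [TopologicalSpace G] [IsTopologicalGroup G]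
    [LocallyCompactSpace G] [SecondCountableTopology G]
    [MeasurableSpace G] [BorelSpace G] [MeasurableSpace X] [StandardBorelSpace X]
    (mG : Measure G) [mG.IsHaarMeasure]
    (θ : Measure G) [IsProbabilityMeasure θ] (hadm : IsAdmissible mG θ)
    [MulAction G X] (hact : Measurable fun p : G × X => p.1 • p.2)
    (μ : Measure X) [IsProbabilityMeasure μ]
    (hstat : ∀ s : Set X, MeasurableSet s → ∫⁻ g, μ.map (g • · : X → X) s ∂θ = μ s)
    (hqi : ∀ g : G, μ.map (g • · : X → X) ≪ μ ∧ μ ≪ μ.map (g • · : X → X))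
    (f : X → ℝ) (hf_meas : Measurable f) (C : ℝ) (hf_bdd : ∀ x, |f x| ≤ C) :
    (∀ᵐ x ∂μ, ∫ g, f (g • x) ∂θ = f x) ↔ ∀ g : G, ∀ᵐ x ∂μ, f (g • x) = f x := by
  classical
  have hsm : ∀ g : G, Measurable fun x : X => g • x := fun g =>
    hact.comp (measurable_const.prodMk measurable_id)
  have hFmeas : Measurable fun p : G × X => f (p.1 • p.2) := hf_meas.comp hact
  have hfb : Measurable fun p : G × X => f p.2 := hf_meas.comp measurable_snd
  constructor
  · intro hT
    -- kernel and stationarity for lintegrals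
    set κ : G → Measure X := fun g => μ.map (g • · : X → X) with hκ
    have hκmeas : Measurable κ := by
      apply Measure.measurable_of_measurable_coe
      intro s hs
      have h1 : ∀ g : G, κ g s = μ (Prod.mk g ⁻¹' {p : G × X | p.1 • p.2 ∈ s}) := by
        intro g
        rw [hκ]
        simp only
        rw [Measure.map_apply (hsm g) hs]
        rfl
      simp_rw [h1]
      exact measurable_measure_prodMk_left (hact hs)
    have hbind : θ.bind κ = μ := by
      ext s hs
      rw [Measure.bind_apply hs hκmeas.aemeasurable]
      exact hstat s hs
    have hstatL : ∀ φ : X → ℝ≥0∞, Measurable φ →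
        ∫⁻ g, ∫⁻ x, φ (g • x) ∂μ ∂θ = ∫⁻ x, φ x ∂μ := by
      intro φ hφ
      conv_rhs => rw [← hbind]
      rw [Measure.lintegral_bind hκmeas.aemeasurable hφ.aemeasurable]
      refine lintegral_congr fun g => ?_
      rw [hκ]
      exact (lintegral_map hφ (hsm g)).symm
    -- basic bounds and integrability
    have hX : Nonempty X := by
      by_contra h
      rw [not_nonempty_iff] at h
      have h1 : μ Set.univ = 1 := measure_univ
      rw [Set.univ_eq_empty_iff.mpr h] at h1
      simp at h1
    have hC : 0 ≤ C := (abs_nonneg _).trans (hf_bdd (Classical.arbitrary X))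
    have hsqb : ∀ y x : X, |(f y - f x) ^ 2| ≤ (2 * C) ^ 2 := by
      intro y x
      have h1 := abs_le.mp (hf_bdd y)
      have h2 := abs_le.mp (hf_bdd x)
      rw [abs_of_nonneg (sq_nonneg _)]
      nlinarith [h1.1, h1.2, h2.1, h2.2]
    have hsqb2 : ∀ x : X, |f x ^ 2| ≤ C ^ 2 := by
      intro x
      have h1 := abs_le.mp (hf_bdd x)
      rw [abs_of_nonneg (sq_nonneg _)]
      nlinarith [h1.1, h1.2]
    have hId : Integrable (fun p : G × X => (f (p.1 • p.2) - f p.2) ^ 2) (θ.prod μ) :=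
      integrable_of_bdd' ((hFmeas.sub hfb).pow_const 2).aestronglyMeasurable
        (fun p => hsqb _ _)
    -- swap to x-then-g order
    have hswap : ∫ p : G × X, (f (p.1 • p.2) - f p.2) ^ 2 ∂(θ.prod μ)
        = ∫ x, ∫ g, (f (g • x) - f x) ^ 2 ∂θ ∂μ := by
      rw [integral_prod _ hId]
      exact integral_integral_swap hId
    -- inner computation
    have hmg : ∀ x : X, Measurable fun g : G => f (g • x) := fun x =>
      hFmeas.comp measurable_prodMk_right
    have hint1 : ∀ x : X, Integrable (fun g : G => f (g • x)) θ := fun x =>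
      integrable_of_bdd' (hmg x).aestronglyMeasurable (fun g => hf_bdd _)
    have hint2 : ∀ x : X, Integrable (fun g : G => f (g • x) ^ 2) θ := fun x =>
      integrable_of_bdd' ((hmg x).pow_const 2).aestronglyMeasurable (fun g => hsqb2 _)
    have hinner : ∀ᵐ x ∂μ, ∫ g, (f (g • x) - f x) ^ 2 ∂θ
        = (∫ g, f (g • x) ^ 2 ∂θ) - f x ^ 2 := by
      filter_upwards [hT] with x hx
      have he : (fun g : G => (f (g • x) - f x) ^ 2)
          = fun g => f (g • x) ^ 2 - 2 * f x * f (g • x) + f x ^ 2 :=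
        funext fun g => by ring
      have hcm : Integrable (fun g : G => 2 * f x * f (g • x)) θ :=
        (hint1 x).const_mul _
      have hsub : Integrable (fun g : G => f (g • x) ^ 2 - 2 * f x * f (g • x)) θ := by
        exact (hint2 x).sub hcm
      have hcmv : ∫ g : G, 2 * f x * f (g • x) ∂θ = 2 * f x * ∫ g : G, f (g • x) ∂θ := by
        rw [← smul_eq_mul (a := 2 * f x), ← integral_smul]
        simp [smul_eq_mul]
      rw [he, integral_add hsub (integrable_const _), integral_sub (hint2 x) hcm,
        hcmv, hx, integral_const]
      simp only [measureReal_def, measure_univ, ENNReal.toReal_one, smul_eq_mul, one_mul]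
      ring
    -- outer function measurable and integrable
    have houtSM : StronglyMeasurable fun x => ∫ g, f (g • x) ^ 2 ∂θ :=
      StronglyMeasurable.integral_prod_left' (f := fun p : G × X => f (p.1 • p.2) ^ 2)
        (hFmeas.pow_const 2).stronglyMeasurable
    have houtI : Integrable (fun x => ∫ g, f (g • x) ^ 2 ∂θ) μ := by
      refine integrable_of_bdd' houtSM.aestronglyMeasurable (D := C ^ 2) fun x => ?_
      rw [abs_of_nonneg (integral_nonneg fun g => sq_nonneg _)]
      calc ∫ g, f (g • x) ^ 2 ∂θ ≤ ∫ _g : G, C ^ 2 ∂θ := by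
            refine integral_mono (hint2 x) (integrable_const _) fun g => ?_
            exact (le_abs_self _).trans (hsqb2 _)
        _ = C ^ 2 := by simp [measure_univ]
    have hfsqI : Integrable (fun x => f x ^ 2) μ :=
      integrable_of_bdd' (hf_meas.pow_const 2).aestronglyMeasurable (fun x => hsqb2 _)
    -- stationarity for f^2 in real form
    have hstat2 : ∫ x, ∫ g, f (g • x) ^ 2 ∂θ ∂μ = ∫ x, f x ^ 2 ∂μ := by
      have hφ : Measurable fun x : X => ENNReal.ofReal (f x ^ 2) :=
        (hf_meas.pow_const 2).ennreal_ofReal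
      have key : ENNReal.ofReal (∫ x, ∫ g, f (g • x) ^ 2 ∂θ ∂μ)
          = ENNReal.ofReal (∫ x, f x ^ 2 ∂μ) := by
        rw [ofReal_integral_eq_lintegral_ofReal houtI
          (Filter.Eventually.of_forall fun x => integral_nonneg fun g => sq_nonneg _)]
        rw [ofReal_integral_eq_lintegral_ofReal hfsqI
          (Filter.Eventually.of_forall fun x => sq_nonneg _)]
        have h1 : ∀ x : X, ENNReal.ofReal (∫ g, f (g • x) ^ 2 ∂θ)
            = ∫⁻ g, ENNReal.ofReal (f (g • x) ^ 2) ∂θ := fun x =>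
          ofReal_integral_eq_lintegral_ofReal (hint2 x)
            (Filter.Eventually.of_forall fun g => sq_nonneg _)
        simp_rw [h1]
        rw [lintegral_lintegral_swap
          (by exact (((hFmeas.pow_const 2).ennreal_ofReal.comp measurable_swap).aemeasurable))]
        exact hstatL _ hφ
      rw [ENNReal.ofReal_eq_ofReal_iff
        (integral_nonneg fun x => integral_nonneg fun g => sq_nonneg _)
        (integral_nonneg fun x => sq_nonneg _)] at key
      exact key
    -- total integral is zero
    have hzero : ∫ p : G × X, (f (p.1 • p.2) - f p.2) ^ 2 ∂(θ.prod μ) = 0 := by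
      rw [hswap, integral_congr_ae hinner, integral_sub houtI hfsqI, hstat2, sub_self]
    have haeprod : ∀ᵐ p : G × X ∂(θ.prod μ), f (p.1 • p.2) = f p.2 := by
      have h := (integral_eq_zero_iff_of_nonneg (fun p => sq_nonneg _) hId).mp hzero
      filter_upwards [h] with p hp
      have h2 : (f (p.1 • p.2) - f p.2) ^ 2 = 0 := hp
      have h3 := sq_eq_zero_iff.mp h2
      linarith
    have hae : ∀ᵐ g ∂θ, ∀ᵐ x ∂μ, f (g • x) = f x := Measure.ae_ae_of_ae_prod haeprod
    -- the invariance set is a subgroup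
    set A : Set G := {g | ∀ᵐ x ∂μ, f (g • x) = f x} with hA
    have hpull : ∀ g h : G, g ∈ A → (∀ᵐ x ∂μ, f (g • h • x) = f (h • x)) := by
      intro g h hg
      have hs : MeasurableSet {x : X | ¬ f (g • x) = f x} :=
        (measurableSet_eq_fun (hf_meas.comp (hsm g)) hf_meas).compl
      have hnull : μ {x : X | ¬ f (g • x) = f x} = 0 := ae_iff.mp hg
      have hmap : μ.map (h • · : X → X) {x : X | ¬ f (g • x) = f x} = 0 := (hqi h).1 hnull
      have hpre : μ ((h • · : X → X) ⁻¹' {x : X | ¬ f (g • x) = f x}) = 0 := by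
        rw [← Measure.map_apply (hsm h) hs]
        exact hmap
      rw [ae_iff]
      exact hpre
    have hone : (1 : G) ∈ A := by
      show ∀ᵐ x ∂μ, f ((1 : G) • x) = f x
      simp only [one_smul]
      exact Filter.Eventually.of_forall fun x => trivial
    have hmul : ∀ g h : G, g ∈ A → h ∈ A → g * h ∈ A := by
      intro g h hg hh
      have h1 := hpull g h hg
      show ∀ᵐ x ∂μ, f ((g * h) • x) = f x
      filter_upwards [h1, (hh : ∀ᵐ x ∂μ, f (h • x) = f x)] with x hx1 hx2
      rw [mul_smul, hx1, hx2]
    have hinv : ∀ g : G, g ∈ A → g⁻¹ ∈ A := by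
      intro g hg
      have h1 := hpull g g⁻¹ hg
      show ∀ᵐ x ∂μ, f (g⁻¹ • x) = f x
      filter_upwards [h1] with x hx1
      rw [smul_inv_smul] at hx1
      exact hx1.symm
    let H : Subgroup G :=
      { carrier := A
        one_mem' := hone
        mul_mem' := fun {a b} ha hb => hmul a b ha hb
        inv_mem' := fun {a} ha => hinv a ha }
    -- A is θ-conull
    have hθA : θ Aᶜ = 0 := by
      have h1 : θ {g : G | ¬ g ∈ A} = 0 := ae_iff.mp hae
      exact h1
    -- a measurable conull subset
    set E : Set G := (toMeasurable θ Aᶜ)ᶜ with hE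
    have hmE : MeasurableSet E := (measurableSet_toMeasurable θ Aᶜ).compl
    have hEsub : E ⊆ A := by
      rw [hE, Set.compl_subset_comm]
      exact subset_toMeasurable θ Aᶜ
    have hθE : θ E = 1 := by
      have h0 : θ Eᶜ = 0 := by
        rw [hE, compl_compl, measure_toMeasurable]
        exact hθA
      exact (prob_compl_eq_zero_iff hmE).mp h0
    have hmGE : mG E ≠ 0 := by
      intro h0
      have := hadm.1 h0
      rw [hθE] at this
      exact one_ne_zero this
    have hnhds : E / E ∈ nhds (1 : G) :=
      Measure.div_mem_nhds_one_of_haar_pos mG E hmE (pos_iff_ne_zero.mpr hmGE)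
    have hAnhds : A ∈ nhds (1 : G) := by
      refine Filter.mem_of_superset hnhds ?_
      intro x hx
      rcases Set.mem_div.mp hx with ⟨a, ha, b, hb, rfl⟩
      exact H.div_mem (hEsub ha) (hEsub hb)
    have hopen : IsOpen A := H.isOpen_of_mem_nhds hAnhds
    have hclosed : IsClosed A := H.isClosed_of_isOpen hopen
    have huniv : A = Set.univ := hadm.2 A hclosed (fun a ha b hb => hmul a b ha hb) hθA
    intro g
    have : g ∈ A := huniv ▸ Set.mem_univ g
    exact this
  · intro h
    have hset : MeasurableSet {p : G × X | f (p.1 • p.2) = f p.2} :=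
      measurableSet_eq_fun hFmeas hfb
    have hprodae : ∀ᵐ p : G × X ∂(θ.prod μ), f (p.1 • p.2) = f p.2 := by
      rw [ae_iff]
      have hN : MeasurableSet {p : G × X | ¬ f (p.1 • p.2) = f p.2} := hset.compl
      rw [Measure.prod_apply hN]
      have h0 : ∀ g : G, μ {a : X | ¬ f (g • a) = f a} = 0 :=
        fun g => ae_iff.mp (h g)
      simp [h0]
    have hm0 : Measurable fun q : X × G => q.2 • q.1 := by exact hact.comp measurable_swap
    have hm1 : Measurable fun q : X × G => f (q.2 • q.1) := hf_meas.comp hm0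
    have hms : MeasurableSet {q : X × G | f (q.2 • q.1) = f q.1} :=
      measurableSet_eq_fun hm1 (hf_meas.comp measurable_fst)
    have hswapae : ∀ᵐ p : X × G ∂(μ.prod θ), f (p.2 • p.1) = f p.1 := by
      rw [← Measure.prod_swap]
      exact (ae_map_iff measurable_swap.aemeasurable hms).mpr hprodae
    have hxg : ∀ᵐ x ∂μ, ∀ᵐ g ∂θ, f (g • x) = f x := Measure.ae_ae_of_ae_prod hswapae
    filter_upwards [hxg] with x hx
    rw [integral_congr_ae hx, integral_const]
    simp [measure_univ]
end

section
/- Let (X,μ) be an ergodic stationary (G,θ)-space (as a G-space). Then the forward skew-product transformation τ(ω,x) = (σω, ω_0.x) on (G^ℕ × X, θ^{⊗ℕ} ⊗ μ) is ergodic, and conversely. -/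
open MeasureTheory ENNReal

open MeasurableSpace Set


namespace Stmt11

variable {G : Type*} [MeasurableSpace G]

/-- finite-dimensional cylinders depending on an initial segment of coordinates -/
def cylinders (G : Type*) [MeasurableSpace G] : Set (Set (ℕ → G)) :=
  {C | ∃ (n : ℕ) (a : ℕ → Set G), (∀ i, MeasurableSet (a i)) ∧
    C = {ω : ℕ → G | ∀ i < n, ω i ∈ a i}}

lemma univ_mem_cylinders : (univ : Set (ℕ → G)) ∈ cylinders G :=
  ⟨0, fun _ => univ, fun _ => MeasurableSet.univ, by ext ω; simp⟩

lemma isCountablySpanning_cylinders : IsCountablySpanning (cylinders G) :=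
  ⟨fun _ => univ, fun _ => univ_mem_cylinders, by simp [Set.iUnion_const]⟩

lemma measurableSet_cyl (n : ℕ) (a : ℕ → Set G) (ha : ∀ i, MeasurableSet (a i)) :
    MeasurableSet {ω : ℕ → G | ∀ i < n, ω i ∈ a i} := by
  have : {ω : ℕ → G | ∀ i < n, ω i ∈ a i} = ⋂ i, ⋂ (_ : i < n), (fun ω : ℕ → G => ω i) ⁻¹' a i := by
    ext ω; simp
  rw [this]
  exact MeasurableSet.iInter fun i => MeasurableSet.iInter fun _ =>
    (measurable_pi_apply i) (ha i)

lemma measurableSet_of_mem_cylinders {C : Set (ℕ → G)} (hC : C ∈ cylinders G) :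
    MeasurableSet C := by
  obtain ⟨n, a, ha, rfl⟩ := hC
  exact measurableSet_cyl n a ha

lemma isPiSystem_cylinders : IsPiSystem (cylinders G) := by
  rintro C1 ⟨n, a, ha, rfl⟩ C2 ⟨m, b, hb, rfl⟩ -
  refine ⟨max n m, fun i => (if i < n then a i else univ) ∩ (if i < m then b i else univ),
    fun i => MeasurableSet.inter
      (by split_ifs; exacts [ha i, MeasurableSet.univ])
      (by split_ifs; exacts [hb i, MeasurableSet.univ]), ?_⟩
  ext ω
  simp only [mem_inter_iff, mem_setOf_eq]
  constructor
  · rintro ⟨h1, h2⟩ i _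
    constructor
    · split_ifs with h; exacts [h1 i h, mem_univ _]
    · split_ifs with h; exacts [h2 i h, mem_univ _]
  · intro h
    constructor
    · intro i hi
      have := (h i (lt_of_lt_of_le hi (le_max_left n m))).1
      simpa [hi] using this
    · intro i hi
      have := (h i (lt_of_lt_of_le hi (le_max_right n m))).2
      simpa [hi] using this

lemma generateFrom_cylinders :
    generateFrom (cylinders G) = (inferInstance : MeasurableSpace (ℕ → G)) := by
  refine le_antisymm (generateFrom_le fun C hC => measurableSet_of_mem_cylinders hC) ?_
  have : (inferInstance : MeasurableSpace (ℕ → G)) = MeasurableSpace.pi := rfl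
  rw [this, MeasurableSpace.pi]
  refine iSup_le fun i => ?_
  rw [MeasurableSpace.comap_le_iff_le_map]
  intro t ht
  -- t measurable in G; goal: measurable set in map, i.e. preimage under eval i in generateFrom
  refine measurableSet_generateFrom ⟨i + 1, fun j => if j = i then t else univ,
    fun j => (by simp only []; split_ifs; exacts [ht, MeasurableSet.univ]), ?_⟩
  ext ω
  simp only [mem_preimage, mem_setOf_eq]
  constructor
  · intro h j hj
    split_ifs with hji
    · subst hji; exact h
    · exact mem_univ _
  · intro h
    have := h i (Nat.lt_succ_self i)
    simpa using this

/-- two probability measures on a product with second factor `ℕ → G` agreeing on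
measurable-rectangle × cylinder sets agree -/
lemma ext_prod_cyl {α : Type*} [MeasurableSpace α] {ρ1 ρ2 : Measure (α × (ℕ → G))}
    [IsProbabilityMeasure ρ1] [IsProbabilityMeasure ρ2]
    (h : ∀ s : Set α, MeasurableSet s → ∀ C ∈ cylinders G, ρ1 (s ×ˢ C) = ρ2 (s ×ˢ C)) :
    ρ1 = ρ2 := by
  refine ext_of_generate_finite _
    (generateFrom_eq_prod generateFrom_measurableSet generateFrom_cylinders
      isCountablySpanning_measurableSet isCountablySpanning_cylinders).symm
    (isPiSystem_measurableSet.prod isPiSystem_cylinders) ?_ (by simp)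
  rintro _ ⟨s, hs, C, hC, rfl⟩
  exact h s hs C hC

/-- symmetric version: first factor `ℕ → G` -/
lemma ext_cyl_prod {X : Type*} [MeasurableSpace X] {ρ1 ρ2 : Measure ((ℕ → G) × X)}
    [IsFiniteMeasure ρ1] [IsFiniteMeasure ρ2]
    (huniv : ρ1 univ = ρ2 univ)
    (h : ∀ C ∈ cylinders G, ∀ t : Set X, MeasurableSet t → ρ1 (C ×ˢ t) = ρ2 (C ×ˢ t)) :
    ρ1 = ρ2 := by
  refine ext_of_generate_finite _
    (generateFrom_eq_prod generateFrom_cylinders generateFrom_measurableSet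
      isCountablySpanning_cylinders isCountablySpanning_measurableSet).symm
    (isPiSystem_cylinders.prod isPiSystem_measurableSet) ?_ huniv
  rintro _ ⟨C, hC, t, ht, rfl⟩
  exact h C hC t ht

set_option linter.unusedSectionVars false


variable {G : Type*} [MeasurableSpace G]

/-- one-sided shift -/
def sh (ω : ℕ → G) : ℕ → G := fun n => ω (n + 1)

/-- prepend a letter -/
def cns (q : G × (ℕ → G)) : ℕ → G := fun n => Nat.casesOn n q.1 (fun k => q.2 k)

/-- word `ω_{n-1} ⋯ ω_0` -/
def gw {G : Type*} [Group G] : ℕ → (ℕ → G) → G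
  | 0, _ => 1
  | n + 1, ω => gw n (sh ω) * ω 0

lemma measurable_sh : Measurable (sh : (ℕ → G) → ℕ → G) :=
  measurable_pi_lambda _ fun n => measurable_pi_apply (n + 1)

lemma measurable_cns : Measurable (cns : G × (ℕ → G) → ℕ → G) := by
  refine measurable_pi_lambda _ fun n => ?_
  cases n with
  | zero => exact measurable_fst
  | succ k => exact (measurable_pi_apply k).comp measurable_snd

lemma measurable_gw {G : Type*} [Group G] [MeasurableSpace G] [MeasurableMul₂ G] (n : ℕ) :
    Measurable (gw n : (ℕ → G) → G) := by
  induction n with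
  | zero => exact measurable_const
  | succ k ih => exact (ih.comp measurable_sh).mul (measurable_pi_apply 0)

lemma cns_split (ω : ℕ → G) : cns (ω 0, sh ω) = ω := by
  funext n; cases n <;> rfl

lemma sh_cns (g : G) (ω : ℕ → G) : sh (cns (g, ω)) = ω := rfl

lemma cns_zero (g : G) (ω : ℕ → G) : cns (g, ω) 0 = g := rfl

variable {θ : Measure G} [IsProbabilityMeasure θ] {P : Measure (ℕ → G)} [IsProbabilityMeasure P]

/-- the law of `(ω 0, sh ω)` is `θ ⊗ P` -/
lemma split_law
    (hiid : ∀ (n : ℕ) (s : ℕ → Set G), (∀ i, MeasurableSet (s i)) →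
      P {ω | ∀ i < n, ω i ∈ s i} = ∏ i ∈ Finset.range n, θ (s i)) :
    P.map (fun ω => (ω 0, sh ω)) = θ.prod P := by
  have hmeas : Measurable (fun ω : ℕ → G => (ω 0, sh ω)) :=
    (measurable_pi_apply 0).prodMk measurable_sh
  haveI : IsProbabilityMeasure (P.map (fun ω : ℕ → G => (ω 0, sh ω))) :=
    Measure.isProbabilityMeasure_map hmeas.aemeasurable
  refine ext_prod_cyl ?_
  rintro t ht C ⟨n, a, ha, rfl⟩
  rw [Measure.map_apply hmeas (ht.prod (measurableSet_cyl n a ha)),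
    Measure.prod_prod]
  set b : ℕ → Set G := fun i => Nat.casesOn i t (fun k => a k) with hb
  have hbm : ∀ i, MeasurableSet (b i) := by
    intro i; cases i; exacts [ht, ha _]
  have hset : (fun ω : ℕ → G => (ω 0, sh ω)) ⁻¹'
      (t ×ˢ {ω : ℕ → G | ∀ i < n, ω i ∈ a i}) = {ω : ℕ → G | ∀ i < n + 1, ω i ∈ b i} := by
    ext ω
    simp only [mem_preimage, mem_prod, mem_setOf_eq]
    constructor
    · rintro ⟨h0, hrest⟩ i hi
      cases i with
      | zero => exact h0
      | succ k => exact hrest k (Nat.succ_lt_succ_iff.mp hi)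
    · intro h
      exact ⟨h 0 (Nat.succ_pos n), fun k hk => h (k + 1) (Nat.succ_lt_succ hk)⟩
  rw [hset, hiid (n + 1) b hbm, hiid n a ha, Finset.prod_range_succ']
  exact mul_comm _ _

lemma cns_law
    (hiid : ∀ (n : ℕ) (s : ℕ → Set G), (∀ i, MeasurableSet (s i)) →
      P {ω | ∀ i < n, ω i ∈ s i} = ∏ i ∈ Finset.range n, θ (s i)) :
    (θ.prod P).map cns = P := by
  rw [← split_law hiid, Measure.map_map measurable_cns
    ((measurable_pi_apply 0).prodMk measurable_sh)]
  have : cns ∘ (fun ω : ℕ → G => (ω 0, sh ω)) = id := by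
    funext ω; exact cns_split ω
  rw [this, Measure.map_id]


end Stmt11

open Stmt11
set_option linter.unusedSectionVars false

set_option maxHeartbeats 1000000 in
/-- A stationary `(G,θ)`-space `(X,μ)` is ergodic as a `G`-space if and only if the
forward skew-product transformation `τ(ω,x) = (σω, ω_0.x)` on `(G^ℕ × X, θ^{⊗ℕ} ⊗ μ)`
is ergodic. -/
theorem stmt_11 {G X : Type*} [Group G] [TopologicalSpace G] [IsTopologicalGroup G]
    [LocallyCompactSpace G] [SecondCountableTopology G]
    [MeasurableSpace G] [BorelSpace G] [MeasurableSpace X] [StandardBorelSpace X]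
    (mG : Measure G) [mG.IsHaarMeasure]
    (θ : Measure G) [IsProbabilityMeasure θ] (hadm : IsAdmissible mG θ)
    [MulAction G X] (hact : Measurable fun p : G × X => p.1 • p.2)
    (μ : Measure X) [IsProbabilityMeasure μ]
    (hstat : ∀ s : Set X, MeasurableSet s → ∫⁻ g, μ.map (g • · : X → X) s ∂θ = μ s)
    (hqi : ∀ g : G, μ.map (g • · : X → X) ≪ μ ∧ μ ≪ μ.map (g • · : X → X))
    (P : Measure (ℕ → G)) [IsProbabilityMeasure P]
    (hiid : ∀ (n : ℕ) (s : ℕ → Set G), (∀ i, MeasurableSet (s i)) →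
      P {ω | ∀ i < n, ω i ∈ s i} = ∏ i ∈ Finset.range n, θ (s i)) :
    (∀ A : Set X, MeasurableSet A →
        (∀ g : G, μ (symmDiff ((g • · : X → X) ⁻¹' A) A) = 0) → μ A = 0 ∨ μ A = 1) ↔
      Ergodic (fun p : (ℕ → G) × X => (fun n => p.1 (n + 1), p.1 0 • p.2)) (P.prod μ) := by
  classical
  set τ : (ℕ → G) × X → (ℕ → G) × X := fun p => (sh p.1, p.1 0 • p.2) with hτdef
  have hτeq : (fun p : (ℕ → G) × X => (fun n => p.1 (n + 1), p.1 0 • p.2)) = τ := rfl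
  rw [hτeq]
  have hactg : ∀ g : G, Measurable (g • · : X → X) := fun g =>
    hact.comp (measurable_const.prodMk measurable_id)
  have h1pair : Measurable fun p : (ℕ → G) × X => (p.1 0, p.2) :=
    ((measurable_pi_apply 0).comp measurable_fst).prodMk measurable_snd
  have hsm : Measurable fun p : (ℕ → G) × X => p.1 0 • p.2 := hact.comp h1pair
  have hτmeas : Measurable τ := (measurable_sh.comp measurable_fst).prodMk hsm
  constructor
  · intro hLHS
    -- stationarity in pushforward form
    have hν : (θ.prod μ).map (fun q : G × X => q.1 • q.2) = μ := by
      refine Measure.ext fun t ht => ?_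
      rw [Measure.map_apply hact ht, Measure.prod_apply (hact ht)]
      have hh : ∀ g : G, μ (Prod.mk g ⁻¹' ((fun q : G × X => q.1 • q.2) ⁻¹' t))
          = μ.map (g • · : X → X) t := by
        intro g; rw [Measure.map_apply (hactg g) ht]; rfl
      simp only [hh]
      exact hstat t ht
    have hPcns : (θ.prod P).map cns = P := cns_law hiid
    -- τ is measure preserving
    have hmap_t : ∀ t : Set X, MeasurableSet t →
        Measurable fun g : G => μ ((g • · : X → X) ⁻¹' t) := by
      intro t ht
      exact measurable_measure_prodMk_left (hact ht)
    have hτpres : MeasurePreserving τ (P.prod μ) (P.prod μ) := by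
      refine ⟨hτmeas, ?_⟩
      refine (Measure.prod_eq (fun s' t hs' ht => ?_)).symm
      rw [Measure.map_apply hτmeas (hs'.prod ht)]
      have hPM : P.prod μ = ((θ.prod P).prod μ).map (Prod.map cns id) := by
        calc P.prod μ = ((θ.prod P).map cns).prod (μ.map id) := by
              rw [hPcns, Measure.map_id]
          _ = ((θ.prod P).prod μ).map (Prod.map cns id) :=
              Measure.map_prod_map _ _ measurable_cns measurable_id
      rw [hPM, Measure.map_apply (measurable_cns.prodMap measurable_id)
        (hτmeas (hs'.prod ht))]
      have hset : (Prod.map cns id) ⁻¹' (τ ⁻¹' (s' ×ˢ t)) =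
          {q : (G × (ℕ → G)) × X | q.1.2 ∈ s' ∧ q.1.1 • q.2 ∈ t} := by
        ext q
        simp only [mem_preimage, Prod.map, mem_prod, mem_setOf_eq, hτdef]
        constructor
        · rintro ⟨h1, h2⟩; exact ⟨h1, h2⟩
        · rintro ⟨h1, h2⟩; exact ⟨h1, h2⟩
      rw [hset]
      have hEmeas : MeasurableSet {q : (G × (ℕ → G)) × X | q.1.2 ∈ s' ∧ q.1.1 • q.2 ∈ t} := by
        refine MeasurableSet.inter ?_ ?_
        · exact measurable_fst (measurable_snd hs')
        · exact (hact.comp ((measurable_fst.comp measurable_fst).prodMk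
            measurable_snd)) ht
      rw [Measure.prod_apply hEmeas]
      have hsl : ∀ q : G × (ℕ → G),
          μ (Prod.mk q ⁻¹' {q : (G × (ℕ → G)) × X | q.1.2 ∈ s' ∧ q.1.1 • q.2 ∈ t})
          = μ ((q.1 • · : X → X) ⁻¹' t) * (Set.indicator s' (fun _ => (1 : ℝ≥0∞)) q.2) := by
        rintro ⟨g, ω⟩
        by_cases hω : ω ∈ s'
        · simp only [Set.indicator_of_mem hω, mul_one]
          congr 1
          ext x; simp [hω]
        · simp only [Set.indicator_of_notMem hω, mul_zero]
          have hemp : Prod.mk (g, ω) ⁻¹'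
              {q : (G × (ℕ → G)) × X | q.1.2 ∈ s' ∧ q.1.1 • q.2 ∈ t} = (∅ : Set X) := by
            ext x; simp [hω]
          rw [hemp]; exact measure_empty
      rw [lintegral_congr hsl]
      have hfub := lintegral_prod_mul (μ := θ) (ν := P)
        (f := fun g : G => μ ((g • · : X → X) ⁻¹' t))
        (g := s'.indicator (fun _ => (1 : ℝ≥0∞)))
        ((hmap_t t ht).aemeasurable) ((measurable_one.indicator hs').aemeasurable)
      rw [hfub]
      have h1 : ∫⁻ g, μ ((g • · : X → X) ⁻¹' t) ∂θ = μ t := by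
        have : ∀ g : G, μ ((g • · : X → X) ⁻¹' t) = μ.map (g • · : X → X) t := by
          intro g; rw [Measure.map_apply (hactg g) ht]
        simp only [this]; exact hstat t ht
      have h2 : ∫⁻ y, s'.indicator (fun _ => (1 : ℝ≥0∞)) y ∂P = P s' := by
        rw [lintegral_indicator hs']
        simp
      rw [h1, h2, mul_comm]
    refine ⟨hτpres, ⟨fun s hs hinv => ?_⟩⟩
    rw [Filter.eventuallyConst_set']
    -- membership transfer along the invariance
    have hmem : ∀ p : (ℕ → G) × X, τ p ∈ s ↔ p ∈ s := by
      intro p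
      constructor
      · intro h; rw [← hinv]; exact h
      · intro h; rw [← hinv] at h; exact h
    have hkey0 : ∀ (g : G) (ω : ℕ → G) (x : X), (cns (g, ω), x) ∈ s ↔ (ω, g • x) ∈ s := by
      intro g ω x
      exact (hmem (cns (g, ω), x)).symm
    -- the harmonic function
    set F' : X → ℝ≥0∞ := fun x => P ((fun ω => (ω, x)) ⁻¹' s) with hF'def
    have hSx : ∀ x : X, MeasurableSet ((fun ω : ℕ → G => (ω, x)) ⁻¹' s) := fun x =>
      measurable_prodMk_right hs
    have hF'meas : Measurable F' := measurable_measure_prodMk_right hs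
    have hF'le : ∀ x, F' x ≤ 1 := fun x => prob_le_one
    have hF'ne : ∀ x, F' x ≠ ⊤ := fun x => ((hF'le x).trans_lt one_lt_top).ne
    have hharm : ∀ x : X, ∫⁻ g, F' (g • x) ∂θ = F' x := by
      intro x
      have h1 : ∀ g : G, F' (g • x) =
          P (Prod.mk g ⁻¹' (cns ⁻¹' ((fun ω : ℕ → G => (ω, x)) ⁻¹' s))) := by
        intro g
        show P ((fun ω : ℕ → G => (ω, g • x)) ⁻¹' s) =
          P (Prod.mk g ⁻¹' (cns ⁻¹' ((fun ω : ℕ → G => (ω, x)) ⁻¹' s)))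
        congr 1
        ext ω
        simp only [mem_preimage]
        exact (hkey0 g ω x).symm
      simp only [h1]
      rw [← Measure.prod_apply (measurable_cns (hSx x)),
        ← Measure.map_apply measurable_cns (hSx x), hPcns]
    -- the real-valued harmonic function
    set FR : X → ℝ := fun x => (F' x).toReal with hFRdef
    have hFRmeas : Measurable FR := hF'meas.ennreal_toReal
    have hFR0 : ∀ x, 0 ≤ FR x := fun x => ENNReal.toReal_nonneg
    have hFR1 : ∀ x, FR x ≤ 1 := fun x => by
      have := ENNReal.toReal_mono one_ne_top (hF'le x)
      simpa using this
    have hgx : ∀ g : G, Measurable fun x : X => g • x := hactg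
    have hxg : ∀ x : X, Measurable fun g : G => g • x := fun x =>
      hact.comp (measurable_id.prodMk measurable_const)
    have hFRharm : ∀ x : X, ∫ g, FR (g • x) ∂θ = FR x := by
      intro x
      have hm : Measurable fun g : G => F' (g • x) := hF'meas.comp (hxg x)
      have : ∫ g, FR (g • x) ∂θ = (∫⁻ g, F' (g • x) ∂θ).toReal :=
        integral_toReal hm.aemeasurable
          (ae_of_all _ fun g => (hF'le _).trans_lt one_lt_top)
      rw [this, hharm x]
    -- integrability of bounded functions
    have hbdd : ∀ {α : Type _} [MeasurableSpace α] (ρ : Measure α) [IsProbabilityMeasure ρ]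
        (f : α → ℝ), Measurable f → (∀ a, |f a| ≤ 1) → Integrable f ρ := by
      intro α _ ρ _ f hf h1
      exact Integrable.mono' (integrable_const 1) hf.aestronglyMeasurable
        (ae_of_all _ fun a => by rw [Real.norm_eq_abs]; simpa using h1 a)
    have habs : ∀ x, |FR x| ≤ 1 := fun x => by
      rw [abs_of_nonneg (hFR0 x)]; exact hFR1 x
    have hFact : Measurable fun q : G × X => FR (q.1 • q.2) := hFRmeas.comp hact
    have hFsnd : Measurable fun q : G × X => FR q.2 := hFRmeas.comp measurable_snd
    have hf1int : Integrable (fun q : G × X => FR (q.1 • q.2) * FR (q.1 • q.2)) (θ.prod μ) :=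
      hbdd _ _ (hFact.mul hFact) (fun q => by
        rw [abs_mul]
        exact mul_le_one₀ (habs _) (abs_nonneg _) (habs _))
    have hf2int : Integrable (fun q : G × X => FR (q.1 • q.2) * FR q.2) (θ.prod μ) :=
      hbdd _ _ (hFact.mul hFsnd) (fun q => by
        rw [abs_mul]
        exact mul_le_one₀ (habs _) (abs_nonneg _) (habs _))
    have hf3int : Integrable (fun q : G × X => FR q.2 * FR q.2) (θ.prod μ) :=
      hbdd _ _ (hFsnd.mul hFsnd) (fun q => by
        rw [abs_mul]
        exact mul_le_one₀ (habs _) (abs_nonneg _) (habs _))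
    have hI1 : ∫ q, FR (q.1 • q.2) * FR (q.1 • q.2) ∂(θ.prod μ) = ∫ x, FR x * FR x ∂μ := by
      have := integral_map (μ := θ.prod μ) (φ := fun q : G × X => q.1 • q.2)
        (f := fun x => FR x * FR x) hact.aemeasurable
        (by rw [hν]; exact (hFRmeas.mul hFRmeas).aestronglyMeasurable)
      rw [hν] at this
      exact this.symm
    have hI2 : ∫ q, FR (q.1 • q.2) * FR q.2 ∂(θ.prod μ) = ∫ x, FR x * FR x ∂μ := by
      rw [integral_prod_symm _ hf2int]
      have : ∀ x : X, ∫ g, FR (g • x) * FR x ∂θ = FR x * FR x := by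
        intro x
        rw [integral_mul_const, hFRharm x]
      simp only [this]
    have hI3 : ∫ q, FR q.2 * FR q.2 ∂(θ.prod μ) = ∫ x, FR x * FR x ∂μ := by
      have := integral_map (μ := θ.prod μ) (φ := (Prod.snd : G × X → X))
        (f := fun x => FR x * FR x) measurable_snd.aemeasurable
        (by rw [Measure.map_snd_prod, measure_univ, one_smul]
            exact (hFRmeas.mul hFRmeas).aestronglyMeasurable)
      rw [Measure.map_snd_prod, measure_univ, one_smul] at this
      exact this.symm
    have hsq : ∫ q, (FR (q.1 • q.2) - FR q.2) ^ 2 ∂(θ.prod μ) = 0 := by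
      have hre : (fun q : G × X => (FR (q.1 • q.2) - FR q.2) ^ 2) =
          fun q => (FR (q.1 • q.2) * FR (q.1 • q.2) - 2 * (FR (q.1 • q.2) * FR q.2)) +
            FR q.2 * FR q.2 := by
        funext q; ring
      have e1 : Integrable (fun q : G × X =>
          FR (q.1 • q.2) * FR (q.1 • q.2) - 2 * (FR (q.1 • q.2) * FR q.2)) (θ.prod μ) :=
        hf1int.sub (hf2int.const_mul 2)
      have hadd : ∫ q, ((FR (q.1 • q.2) * FR (q.1 • q.2) - 2 * (FR (q.1 • q.2) * FR q.2)) +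
            FR q.2 * FR q.2) ∂(θ.prod μ) =
          (∫ q, (FR (q.1 • q.2) * FR (q.1 • q.2) - 2 * (FR (q.1 • q.2) * FR q.2)) ∂(θ.prod μ)) +
            ∫ q, FR q.2 * FR q.2 ∂(θ.prod μ) := integral_add e1 hf3int
      have hsub : ∫ q, (FR (q.1 • q.2) * FR (q.1 • q.2) - 2 * (FR (q.1 • q.2) * FR q.2))
            ∂(θ.prod μ) =
          (∫ q, FR (q.1 • q.2) * FR (q.1 • q.2) ∂(θ.prod μ)) -
            ∫ q, 2 * (FR (q.1 • q.2) * FR q.2) ∂(θ.prod μ) :=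
        integral_sub hf1int (hf2int.const_mul 2)
      have hcm : ∫ q, 2 * (FR (q.1 • q.2) * FR q.2) ∂(θ.prod μ) =
          2 * ∫ q, FR (q.1 • q.2) * FR q.2 ∂(θ.prod μ) := integral_const_mul 2 _
      rw [hre, hadd, hsub, hcm, hI1, hI2, hI3]
      ring
    have hae : ∀ᵐ q ∂(θ.prod μ), FR (q.1 • q.2) = FR q.2 := by
      have hsqint : Integrable (fun q : G × X => (FR (q.1 • q.2) - FR q.2) ^ 2) (θ.prod μ) := by
        refine hbdd _ _ ((hFact.sub hFsnd).pow_const 2) fun q => ?_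
        have h1 : |FR (q.1 • q.2) - FR q.2| ≤ 1 := by
          rw [abs_sub_le_iff]
          constructor
          · linarith [hFR1 (q.1 • q.2), hFR0 q.2]
          · linarith [hFR1 q.2, hFR0 (q.1 • q.2)]
        calc |(FR (q.1 • q.2) - FR q.2) ^ 2| = |FR (q.1 • q.2) - FR q.2| ^ 2 := abs_pow _ 2
          _ ≤ 1 ^ 2 := by
              apply pow_le_pow_left₀ (abs_nonneg _) h1
          _ = 1 := one_pow 2
      have h0 := (integral_eq_zero_iff_of_nonneg (fun q => sq_nonneg _) hsqint).mp hsq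
      filter_upwards [h0] with q hq
      have : (FR (q.1 • q.2) - FR q.2) ^ 2 = 0 := hq
      have h2 : FR (q.1 • q.2) - FR q.2 = 0 := by
        have := sq_eq_zero_iff.mp this
        exact this
      linarith
    have hgae : ∀ᵐ g ∂θ, ∀ᵐ x ∂μ, FR (g • x) = FR x := Measure.ae_ae_of_ae_prod hae
    -- the invariance group
    set S : Set G := {g : G | ∀ᵐ x ∂μ, FR (g • x) = FR x} with hSdef
    have hpull : ∀ (g : G) (N : Set X), MeasurableSet N → μ N = 0 →
        μ ((g • · : X → X) ⁻¹' N) = 0 := by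
      intro g N hN h0
      have h1 : μ.map (g • · : X → X) N = 0 := (hqi g).1 h0
      rwa [Measure.map_apply (hactg g) hN] at h1
    have hNmeas : ∀ g : G, MeasurableSet {x : X | ¬ FR (g • x) = FR x} :=
      fun g => (measurableSet_eq_fun (hFRmeas.comp (hgx g)) hFRmeas).compl
    have hmulS : ∀ g ∈ S, ∀ h ∈ S, g * h ∈ S := by
      intro g hg h hh
      have hg' : ∀ᵐ x ∂μ, FR (g • x) = FR x := hg
      have hh' : ∀ᵐ x ∂μ, FR (h • x) = FR x := hh
      have h1 : ∀ᵐ x ∂μ, FR (g • (h • x)) = FR (h • x) := by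
        rw [ae_iff]
        exact hpull h _ (hNmeas g) (ae_iff.mp hg')
      show ∀ᵐ x ∂μ, FR ((g * h) • x) = FR x
      filter_upwards [h1, hh'] with x h1x hhx
      rw [mul_smul, h1x, hhx]
    have hinvS : ∀ g ∈ S, g⁻¹ ∈ S := by
      intro g hg
      have hg' : ∀ᵐ x ∂μ, FR (g • x) = FR x := hg
      have h1 : ∀ᵐ x ∂μ, FR (g • (g⁻¹ • x)) = FR (g⁻¹ • x) := by
        rw [ae_iff]
        exact hpull g⁻¹ _ (hNmeas g) (ae_iff.mp hg')
      show ∀ᵐ x ∂μ, FR (g⁻¹ • x) = FR x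
      filter_upwards [h1] with x hx
      rw [smul_inv_smul] at hx
      exact hx.symm
    have h1S : (1 : G) ∈ S := by
      show ∀ᵐ x ∂μ, FR ((1 : G) • x) = FR x
      exact ae_of_all _ fun x => by rw [one_smul]
    have hSmeas : MeasurableSet S := by
      have hintmeas : Measurable fun q : G × X => ENNReal.ofReal |FR (q.1 • q.2) - FR q.2| :=
        ((hFact.sub hFsnd).abs).ennreal_ofReal
      have hDmeas : Measurable fun g : G => ∫⁻ x, ENNReal.ofReal |FR (g • x) - FR x| ∂μ :=
        hintmeas.lintegral_prod_right'
      have hSeq : S = (fun g : G => ∫⁻ x, ENNReal.ofReal |FR (g • x) - FR x| ∂μ) ⁻¹' {0} := by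
        ext g
        simp only [mem_preimage, mem_singleton_iff, hSdef, mem_setOf_eq]
        have hmg : Measurable fun x : X => ENNReal.ofReal |FR (g • x) - FR x| :=
          ((hFRmeas.comp (hgx g)).sub hFRmeas).abs.ennreal_ofReal
        rw [lintegral_eq_zero_iff hmg]
        constructor
        · intro hg
          filter_upwards [hg] with x hx
          simp [hx]
        · intro hg
          filter_upwards [hg] with x hx
          have h1 : |FR (g • x) - FR x| ≤ 0 := ENNReal.ofReal_eq_zero.mp hx
          have h2 : FR (g • x) - FR x = 0 := abs_eq_zero.mp (le_antisymm h1 (abs_nonneg _))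
          linarith
      rw [hSeq]
      exact hDmeas (measurableSet_singleton 0)
    have hθS : θ Sᶜ = 0 := ae_iff.mp hgae
    have hmGS : 0 < mG S := by
      rcases eq_or_lt_of_le (show (0 : ℝ≥0∞) ≤ mG S from zero_le) with h0 | h0
      · exfalso
        have hθS0 : θ S = 0 := hadm.1 h0.symm
        have : (1 : ℝ≥0∞) ≤ 0 := by
          have hle := measure_union_le (μ := θ) S Sᶜ
          rw [union_compl_self, measure_univ, hθS0, hθS] at hle
          simpa using hle
        simp at this
      · exact h0
    have hSnhds : S ∈ nhds (1 : G) := by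
      refine Filter.mem_of_superset (Measure.div_mem_nhds_one_of_haar_pos mG S hSmeas hmGS) ?_
      rintro x hx
      rw [Set.mem_div] at hx
      obtain ⟨a, ha, b, hb, rfl⟩ := hx
      rw [div_eq_mul_inv]
      exact hmulS a ha b⁻¹ (hinvS b hb)
    obtain ⟨U, hUS, hUopen, hU1⟩ := mem_nhds_iff.mp hSnhds
    have hSopen : IsOpen S := by
      rw [isOpen_iff_mem_nhds]
      intro g hg
      have : (Homeomorph.mulLeft g) ⁻¹' S ∈ nhds (1 : G) := by
        refine Filter.mem_of_superset (hUopen.mem_nhds hU1) ?_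
        intro u hu
        simp only [mem_preimage, Homeomorph.coe_mulLeft]
        exact hmulS g hg u (hUS hu)
      have h2 : Filter.map (⇑(Homeomorph.mulLeft g)) (nhds 1) = nhds g := by
        simpa using (Homeomorph.mulLeft g).map_nhds_eq (1 : G)
      rw [← h2]
      exact Filter.mem_map.mpr this
    have hSclosed : IsClosed S := by
      rw [← isOpen_compl_iff]
      rw [isOpen_iff_mem_nhds]
      intro g hg
      have : (Homeomorph.mulLeft g) ⁻¹' Sᶜ ∈ nhds (1 : G) := by
        refine Filter.mem_of_superset (hUopen.mem_nhds hU1) ?_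
        intro u hu
        simp only [mem_preimage, Homeomorph.coe_mulLeft, mem_compl_iff]
        intro hgu
        exact hg (by
          have := hmulS (g * u) hgu u⁻¹ (hinvS u (hUS hu))
          rwa [mul_assoc, mul_inv_cancel, mul_one] at this)
      have h2 : Filter.map (⇑(Homeomorph.mulLeft g)) (nhds 1) = nhds g := by
        simpa using (Homeomorph.mulLeft g).map_nhds_eq (1 : G)
      rw [← h2]
      exact Filter.mem_map.mpr this
    have hSuniv : S = univ := hadm.2 S hSclosed hmulS hθS
    have hGinv : ∀ g : G, ∀ᵐ x ∂μ, FR (g • x) = FR x := by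
      intro g
      have : g ∈ S := by rw [hSuniv]; exact mem_univ g
      exact this
    -- level sets are trivial, so FR is a.e. constant
    have htriv : ∀ t : ℝ, μ {x | t < FR x} = 0 ∨ μ {x | t < FR x} = 1 := by
      intro t
      refine hLHS _ (measurableSet_lt measurable_const hFRmeas) fun g => ?_
      have hnull : μ {x : X | ¬ FR (g • x) = FR x} = 0 := ae_iff.mp (hGinv g)
      refine measure_mono_null ?_ hnull
      intro x hx
      rcases hx with hx | hx
      · exact fun heq => hx.2 (by rw [mem_setOf_eq, ← heq]; exact hx.1)
      · exact fun heq => hx.2 (by rw [mem_preimage, mem_setOf_eq, heq]; exact hx.1)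
    -- FR is a.e. equal to a constant c
    set T : Set ℝ := {t : ℝ | μ {x | t < FR x} = 0} with hTdef
    have h1T : (1 : ℝ) ∈ T := by
      have hemp : {x : X | (1:ℝ) < FR x} = ∅ := by
        ext x; simp only [mem_setOf_eq, mem_empty_iff_false, iff_false, not_lt]
        exact hFR1 x
      simp only [hTdef, mem_setOf_eq, hemp, measure_empty]
    have hTlb : ∀ t ∈ T, (0:ℝ) ≤ t := by
      intro t ht
      by_contra hlt
      push_neg at hlt
      have huniv : {x : X | t < FR x} = univ := by
        ext x; simp only [mem_setOf_eq, mem_univ, iff_true]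
        exact lt_of_lt_of_le hlt (hFR0 x)
      rw [hTdef, mem_setOf_eq, huniv, measure_univ] at ht
      exact one_ne_zero ht
    have hTne : T.Nonempty := ⟨1, h1T⟩
    have hTbdd : BddBelow T := ⟨0, hTlb⟩
    set c : ℝ := sInf T with hcdef
    have hc0 : 0 ≤ c := le_csInf hTne hTlb
    have hc1 : c ≤ 1 := csInf_le hTbdd h1T
    have hup : ∀ t ∈ T, ∀ t' : ℝ, t ≤ t' → t' ∈ T := by
      intro t ht t' htt'
      refine measure_mono_null ?_ ht
      intro x hx
      exact lt_of_le_of_lt htt' hx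
    have ha : μ {x | c < FR x} = 0 := by
      have hsub : {x | c < FR x} ⊆ ⋃ q : ℚ, {x | c < (q:ℝ) ∧ (q:ℝ) < FR x} := by
        intro x hx
        obtain ⟨q, hq1, hq2⟩ := exists_rat_btwn (show c < FR x from hx)
        exact mem_iUnion.2 ⟨q, hq1, hq2⟩
      refine measure_mono_null hsub (measure_iUnion_null fun q => ?_)
      by_cases hq : c < (q:ℝ)
      · obtain ⟨t, htT, htq⟩ := exists_lt_of_csInf_lt hTne hq
        refine measure_mono_null ?_ htT
        intro x hx
        exact lt_trans htq hx.2
      · have : {x : X | c < (q:ℝ) ∧ (q:ℝ) < FR x} = ∅ := by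
          ext x; simp only [mem_setOf_eq, mem_empty_iff_false, iff_false]
          exact fun h => hq h.1
        rw [this]; exact measure_empty
    have hb : μ {x | FR x < c} = 0 := by
      have hsub : {x | FR x < c} ⊆ ⋃ q : ℚ, {x | FR x ≤ (q:ℝ) ∧ (q:ℝ) < c} := by
        intro x hx
        obtain ⟨q, hq1, hq2⟩ := exists_rat_btwn (show FR x < c from hx)
        exact mem_iUnion.2 ⟨q, le_of_lt hq1, hq2⟩
      refine measure_mono_null hsub (measure_iUnion_null fun q => ?_)
      by_cases hq : (q:ℝ) < c
      · have hqT : (q:ℝ) ∉ T := by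
          intro hmem
          exact absurd (csInf_le hTbdd hmem) (not_le.mpr hq)
        have h1 : μ {x | (q:ℝ) < FR x} = 1 := by
          rcases htriv (q:ℝ) with h | h
          · exact absurd h hqT
          · exact h
        have h0 : μ {x | (q:ℝ) < FR x}ᶜ = 0 :=
          (prob_compl_eq_zero_iff (measurableSet_lt measurable_const hFRmeas)).mpr h1
        refine measure_mono_null ?_ h0
        intro x hx
        simp only [mem_compl_iff, mem_setOf_eq, not_lt]
        exact hx.1
      · have : {x : X | FR x ≤ (q:ℝ) ∧ (q:ℝ) < c} = ∅ := by
          ext x; simp only [mem_setOf_eq, mem_empty_iff_false, iff_false]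
          exact fun h => hq h.2
        rw [this]; exact measure_empty
    have hconst : ∀ᵐ x ∂μ, FR x = c := by
      rw [ae_iff]
      refine measure_mono_null ?_ (measure_union_null ha hb)
      intro x hx
      rcases lt_or_gt_of_ne (hx : ¬ FR x = c) with h | h
      · exact Or.inr h
      · exact Or.inl h
    have hF'c : ∀ᵐ x ∂μ, F' x = ENNReal.ofReal c := by
      filter_upwards [hconst] with x hx
      rw [← hx, hFRdef]
      exact (ENNReal.ofReal_toReal (hF'ne x)).symm
    -- the word maps and their laws
    have hgwsm : ∀ n : ℕ, Measurable fun p : (ℕ → G) × X => gw n p.1 • p.2 := fun n =>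
      hact.comp (((measurable_gw n).comp measurable_fst).prodMk measurable_snd)
    have hlaw : ∀ n : ℕ, (P.prod μ).map (fun p : (ℕ → G) × X => gw n p.1 • p.2) = μ := by
      intro n
      induction n with
      | zero =>
        have h1 : (fun p : (ℕ → G) × X => gw 0 p.1 • p.2) = Prod.snd := by
          funext p; exact one_smul _ _
        rw [h1, Measure.map_snd_prod, measure_univ, one_smul]
      | succ k ih =>
        have hcomp : (fun p : (ℕ → G) × X => gw (k + 1) p.1 • p.2) =
            (fun p : (ℕ → G) × X => gw k p.1 • p.2) ∘ τ := by
          funext p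
          show gw (k + 1) p.1 • p.2 = gw k (sh p.1) • (p.1 0 • p.2)
          rw [← mul_smul]
          rfl
        rw [hcomp, ← Measure.map_map (hgwsm k) hτmeas, hτpres.map_eq, ih]
    -- the key exact computation by induction
    have key : ∀ (n : ℕ) (a : ℕ → Set G), (∀ i, MeasurableSet (a i)) → ∀ x : X,
        P ({ω | ∀ i < n, ω i ∈ a i} ∩ {ω | (ω, x) ∈ s}) =
        ∫⁻ ω in {ω | ∀ i < n, ω i ∈ a i}, F' (gw n ω • x) ∂P := by
      intro n
      induction n with
      | zero =>
        intro a ha x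
        have huniv : {ω : ℕ → G | ∀ i < 0, ω i ∈ a i} = univ := by ext; simp
        rw [huniv, univ_inter, Measure.restrict_univ]
        have h1 : (fun ω : ℕ → G => F' (gw 0 ω • x)) = fun _ => F' x := by
          funext ω
          show F' ((1 : G) • x) = F' x
          rw [one_smul]
        rw [h1, lintegral_const, measure_univ, mul_one]
        rfl
      | succ k ih =>
        intro a ha x
        set C : Set (ℕ → G) := {ω | ∀ i < k + 1, ω i ∈ a i} with hCdef
        set C' : Set (ℕ → G) := {ω | ∀ i < k, ω i ∈ a (i + 1)} with hC'def
        have hCm : MeasurableSet C := measurableSet_cyl (k + 1) a ha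
        have hC'm : MeasurableSet C' := measurableSet_cyl k (fun i => a (i + 1)) fun i => ha _
        have hmemC : ∀ (g : G) (ω : ℕ → G), cns (g, ω) ∈ C ↔ g ∈ a 0 ∧ ω ∈ C' := by
          intro g ω
          constructor
          · intro h
            exact ⟨h 0 (Nat.succ_pos k), fun i hi => h (i + 1) (Nat.succ_lt_succ hi)⟩
          · rintro ⟨h0, h1⟩ i hi
            cases i with
            | zero => exact h0
            | succ j => exact h1 j (Nat.succ_lt_succ_iff.mp hi)
        have hSx' : MeasurableSet {ω : ℕ → G | (ω, x) ∈ s} := hSx x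
        have hslice : ∀ g : G, P (Prod.mk g ⁻¹' (cns ⁻¹' (C ∩ {ω | (ω, x) ∈ s})))
            = Set.indicator (a 0) (fun g => P (C' ∩ {ω | (ω, g • x) ∈ s})) g := by
          intro g
          have hset : Prod.mk g ⁻¹' (cns ⁻¹' (C ∩ {ω | (ω, x) ∈ s})) =
              if g ∈ a 0 then C' ∩ {ω | (ω, g • x) ∈ s} else ∅ := by
            ext ω
            by_cases hg : g ∈ a 0
            · simp only [hg, if_true, mem_preimage, mem_inter_iff, mem_setOf_eq]
              rw [hmemC g ω]
              constructor
              · rintro ⟨⟨_, h2⟩, h3⟩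
                exact ⟨h2, (hkey0 g ω x).mp h3⟩
              · rintro ⟨h2, h3⟩
                exact ⟨⟨hg, h2⟩, (hkey0 g ω x).mpr h3⟩
            · simp only [hg, if_false, mem_preimage, mem_inter_iff, mem_empty_iff_false,
                iff_false, not_and]
              intro hmem
              exact absurd ((hmemC g ω).mp hmem).1 hg
          rw [hset]
          by_cases hg : g ∈ a 0
          · rw [if_pos hg, Set.indicator_of_mem hg]
          · rw [if_neg hg, Set.indicator_of_notMem hg, measure_empty]
        have hmid : P (C ∩ {ω | (ω, x) ∈ s}) =
            ∫⁻ g, Set.indicator (a 0)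
              (fun g => ∫⁻ ω in C', F' (gw k ω • (g • x)) ∂P) g ∂θ := by
          calc P (C ∩ {ω | (ω, x) ∈ s})
              = (Measure.map cns (θ.prod P)) (C ∩ {ω | (ω, x) ∈ s}) := by rw [hPcns]
            _ = (θ.prod P) (cns ⁻¹' (C ∩ {ω | (ω, x) ∈ s})) :=
                Measure.map_apply measurable_cns (hCm.inter hSx')
            _ = ∫⁻ g, P (Prod.mk g ⁻¹' (cns ⁻¹' (C ∩ {ω | (ω, x) ∈ s}))) ∂θ :=
                Measure.prod_apply (measurable_cns (hCm.inter hSx'))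
            _ = ∫⁻ g, Set.indicator (a 0) (fun g => P (C' ∩ {ω | (ω, g • x) ∈ s})) g ∂θ :=
                lintegral_congr hslice
            _ = ∫⁻ g, Set.indicator (a 0)
                  (fun g => ∫⁻ ω in C', F' (gw k ω • (g • x)) ∂P) g ∂θ := by
                congr 1
                funext g
                by_cases hg : g ∈ a 0
                · rw [Set.indicator_of_mem hg, Set.indicator_of_mem hg, hC'def]
                  exact ih (fun i => a (i + 1)) (fun i => ha _) (g • x)
                · rw [Set.indicator_of_notMem hg, Set.indicator_of_notMem hg]
        have hgwmeas : Measurable fun ω : ℕ → G => F' (gw (k + 1) ω • x) :=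
          hF'meas.comp (hact.comp ((measurable_gw (k + 1)).prodMk measurable_const))
        have hRHS : ∫⁻ ω in C, F' (gw (k + 1) ω • x) ∂P =
            ∫⁻ g, Set.indicator (a 0)
              (fun g => ∫⁻ ω in C', F' (gw k ω • (g • x)) ∂P) g ∂θ := by
          calc ∫⁻ ω in C, F' (gw (k + 1) ω • x) ∂P
              = ∫⁻ ω, C.indicator (fun ω' => F' (gw (k + 1) ω' • x)) ω ∂P :=
                (lintegral_indicator hCm _).symm
            _ = ∫⁻ ω, C.indicator (fun ω' => F' (gw (k + 1) ω' • x)) ω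
                  ∂(Measure.map cns (θ.prod P)) := by rw [hPcns]
            _ = ∫⁻ q, C.indicator (fun ω' => F' (gw (k + 1) ω' • x)) (cns q) ∂(θ.prod P) :=
                lintegral_map (hgwmeas.indicator hCm) measurable_cns
            _ = ∫⁻ g, ∫⁻ ω, C.indicator (fun ω' => F' (gw (k + 1) ω' • x)) (cns (g, ω)) ∂P ∂θ :=
                lintegral_prod _ ((hgwmeas.indicator hCm).comp measurable_cns).aemeasurable
            _ = ∫⁻ g, Set.indicator (a 0)
                  (fun g => ∫⁻ ω in C', F' (gw k ω • (g • x)) ∂P) g ∂θ := by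
                congr 1
                funext g
                by_cases hg : g ∈ a 0
                · rw [Set.indicator_of_mem hg, ← lintegral_indicator hC'm]
                  congr 1
                  funext ω
                  by_cases hω : ω ∈ C'
                  · rw [Set.indicator_of_mem ((hmemC g ω).mpr ⟨hg, hω⟩),
                      Set.indicator_of_mem hω]
                    show F' ((gw k ω * g) • x) = F' (gw k ω • (g • x))
                    rw [mul_smul]
                  · rw [Set.indicator_of_notMem (fun hmem => hω ((hmemC g ω).mp hmem).2),
                      Set.indicator_of_notMem hω]
                · rw [Set.indicator_of_notMem hg]
                  have hzero : ∀ ω : ℕ → G,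
                      C.indicator (fun ω' => F' (gw (k + 1) ω' • x)) (cns (g, ω)) = 0 := fun ω =>
                    Set.indicator_of_notMem (fun hmem => hg ((hmemC g ω).mp hmem).1) _
                  simp only [hzero, lintegral_zero]
        rw [hmid, hRHS]
    -- the law of `gw n ω • x` and the a.e. constancy along it
    have haegw : ∀ n : ℕ, ∀ᵐ p ∂(P.prod μ), F' (gw n p.1 • p.2) = ENNReal.ofReal c := by
      intro n
      have hBm : MeasurableSet {x : X | ¬ F' x = ENNReal.ofReal c} :=
        (hF'meas (measurableSet_singleton _)).compl
      have h0 : μ {x : X | ¬ F' x = ENNReal.ofReal c} = 0 := ae_iff.mp hF'c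
      rw [ae_iff]
      have heq : {p : (ℕ → G) × X | ¬ F' (gw n p.1 • p.2) = ENNReal.ofReal c} =
          (fun p : (ℕ → G) × X => gw n p.1 • p.2) ⁻¹' {x : X | ¬ F' x = ENNReal.ofReal c} := rfl
      rw [heq, ← Measure.map_apply (hgwsm n) hBm, hlaw n, h0]
    -- total mass of s
    have hm : (P.prod μ) s = ENNReal.ofReal c := by
      rw [Measure.prod_apply_symm hs]
      have h1 : (fun x => P ((fun ω : ℕ → G => (ω, x)) ⁻¹' s)) = F' := rfl
      rw [h1, lintegral_congr_ae hF'c, lintegral_const, measure_univ, mul_one]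
    -- the restricted measure is a multiple of the product measure
    haveI hfin2 : IsFiniteMeasure (ENNReal.ofReal c • (P.prod μ)) := by
      refine ⟨?_⟩
      rw [Measure.smul_apply, smul_eq_mul, measure_univ, mul_one]
      exact ENNReal.ofReal_lt_top
    have hres : (P.prod μ).restrict s = ENNReal.ofReal c • (P.prod μ) := by
      refine ext_cyl_prod ?_ ?_
      · rw [Measure.restrict_apply MeasurableSet.univ, univ_inter, hm,
          Measure.smul_apply, smul_eq_mul, measure_univ, mul_one]
      · rintro C ⟨n, a, ha, rfl⟩ t ht
        set C : Set (ℕ → G) := {ω | ∀ i < n, ω i ∈ a i} with hCdef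
        have hCm : MeasurableSet C := measurableSet_cyl n a ha
        rw [Measure.restrict_apply (hCm.prod ht),
          Measure.prod_apply_symm ((hCm.prod ht).inter hs)]
        have hsl : ∀ x : X, P ((fun ω : ℕ → G => (ω, x)) ⁻¹' (C ×ˢ t ∩ s)) =
            Set.indicator t (fun x => P (C ∩ {ω | (ω, x) ∈ s})) x := by
          intro x
          by_cases hx : x ∈ t
          · rw [Set.indicator_of_mem hx]
            congr 1
            ext ω
            simp [hx]
          · rw [Set.indicator_of_notMem hx]
            have : (fun ω : ℕ → G => (ω, x)) ⁻¹' (C ×ˢ t ∩ s) = ∅ := by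
              ext ω; simp [hx]
            rw [this, measure_empty]
        rw [lintegral_congr hsl]
        have hrepl : (fun x => Set.indicator t (fun x => P (C ∩ {ω | (ω, x) ∈ s})) x) =
            fun x => Set.indicator t (fun x => ∫⁻ ω in C, F' (gw n ω • x) ∂P) x := by
          funext x
          by_cases hx : x ∈ t
          · rw [Set.indicator_of_mem hx, Set.indicator_of_mem hx, key n a ha x]
          · rw [Set.indicator_of_notMem hx, Set.indicator_of_notMem hx]
        rw [hrepl, lintegral_indicator ht]
        have hprodform : ∫⁻ x in t, ∫⁻ ω in C, F' (gw n ω • x) ∂P ∂μ =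
            ∫⁻ p in C ×ˢ t, F' (gw n p.1 • p.2) ∂(P.prod μ) := by
          rw [← Measure.prod_restrict]
          exact (lintegral_prod_symm _
            ((hF'meas.comp (hact.comp ((measurable_gw n).comp measurable_fst |>.prodMk
              measurable_snd))).aemeasurable)).symm
        rw [hprodform]
        have hconst2 : ∫⁻ p in C ×ˢ t, F' (gw n p.1 • p.2) ∂(P.prod μ) =
            ∫⁻ _ in C ×ˢ t, ENNReal.ofReal c ∂(P.prod μ) :=
          lintegral_congr_ae (ae_restrict_of_ae (haegw n))
        rw [hconst2, setLIntegral_const, Measure.smul_apply, smul_eq_mul]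
    -- conclusion
    have hc'le : ENNReal.ofReal c ≤ 1 := by rw [← hm]; exact prob_le_one
    have h1 : ((P.prod μ).restrict s) sᶜ = 0 := by
      rw [Measure.restrict_apply hs.compl, compl_inter_self, measure_empty]
    rw [hres, Measure.smul_apply, smul_eq_mul,
      measure_compl hs (measure_ne_top _ _), measure_univ, hm] at h1
    rcases mul_eq_zero.mp h1 with hc0' | hc1'
    · left
      rw [ae_eq_empty, hm]
      exact hc0'
    · right
      rw [ae_eq_univ, measure_compl hs (measure_ne_top _ _), measure_univ, hm]
      exact hc1'

  · -- easy direction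
    intro hErg A hA hAinv
    have hB : MeasurableSet ((univ : Set (ℕ → G)) ×ˢ A) := MeasurableSet.univ.prod hA
    have hpre : τ ⁻¹' ((univ : Set (ℕ → G)) ×ˢ A) =ᵐ[P.prod μ] (univ : Set (ℕ → G)) ×ˢ A := by
      rw [← measure_symmDiff_eq_zero_iff]
      have hsymm_meas : MeasurableSet
          (symmDiff (τ ⁻¹' ((univ : Set (ℕ → G)) ×ˢ A)) ((univ : Set (ℕ → G)) ×ˢ A)) :=
        (hτmeas hB).symmDiff hB
      rw [Measure.prod_apply hsymm_meas]
      have hslice : ∀ ω : ℕ → G,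
          (Prod.mk ω ⁻¹' (symmDiff (τ ⁻¹' ((univ : Set (ℕ → G)) ×ˢ A)) ((univ : Set (ℕ → G)) ×ˢ A)))
          = symmDiff ((ω 0 • · : X → X) ⁻¹' A) A := by
        intro ω
        ext x
        simp only [symmDiff_def, Set.mem_union, Set.mem_diff, mem_preimage, mem_prod, mem_univ,
          true_and, Set.sup_eq_union, mem_setOf_eq]
        exact Iff.rfl
      have h0 : ∀ ω : ℕ → G,
          μ (Prod.mk ω ⁻¹' (symmDiff (τ ⁻¹' ((univ : Set (ℕ → G)) ×ˢ A))
            ((univ : Set (ℕ → G)) ×ˢ A))) = 0 := fun ω => by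
        rw [hslice ω]; exact hAinv (ω 0)
      simp only [h0, lintegral_zero]
    rcases hErg.quasiErgodic.ae_empty_or_univ₀ hB.nullMeasurableSet hpre with h | h
    · left
      have : (P.prod μ) ((univ : Set (ℕ → G)) ×ˢ A) = 0 := by
        rw [← Set.bot_eq_empty] at h
        simpa using measure_congr h
      rwa [Measure.prod_prod, measure_univ, one_mul] at this
    · right
      have : (P.prod μ) ((univ : Set (ℕ → G)) ×ˢ A) = 1 := by
        have := measure_congr h
        simpa using this
      rwa [Measure.prod_prod, measure_univ, one_mul] at this
end

section
/- Let A_1, A_2, … and B_1, B_2, … be independent i.i.d. sequences of real random variables with A_n > 0, satisfying −∞ < 𝔼[log A_1] < 0 and 𝔼[log⁺|B_1|] < ∞. Set Q_0 = 1 and Q_n = A_1⋯A_n. Then the series R_∞ = Σ_{n=1}^∞ Q_{n−1} B_n converges absolutely almost surely. -/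
open MeasureTheory Filter

private lemma aux_le_exp_logplus {x : ℝ} (_hx : 0 ≤ x) :
    x ≤ Real.exp (max 0 (Real.log x)) := by
  rcases le_or_gt x 1 with h | h
  · exact h.trans (by simp [Real.one_le_exp (le_max_left 0 (Real.log x))])
  · calc x = Real.exp (Real.log x) := (Real.exp_log (by linarith)).symm
      _ ≤ _ := Real.exp_le_exp.2 (le_max_right _ _)

/-- For independent i.i.d. sequences `(A_n)`, `(B_n)` with `A_n > 0`,
`−∞ < 𝔼[log A] < 0` and `𝔼[log⁺|B|] < ∞`, the series `Σ Q_n B_{n+1}` with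
`Q_n = A_1⋯A_n` converges absolutely almost surely. -/
theorem stmt_12 {Ω : Type*} [MeasurableSpace Ω] (P : Measure Ω) [IsProbabilityMeasure P]
    (A B : ℕ → Ω → ℝ)
    (hA_meas : ∀ n, Measurable (A n)) (hB_meas : ∀ n, Measurable (B n))
    (hA_pos : ∀ n ω, 0 < A n ω)
    (hA_id : ∀ n, P.map (A n) = P.map (A 0))
    (hB_id : ∀ n, P.map (B n) = P.map (B 0))
    (hindep : ProbabilityTheory.iIndepFun
      (Sum.elim A B) P)
    (hlogA_int : Integrable (fun ω => Real.log (A 0 ω)) P)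
    (hlogA_neg : ∫ ω, Real.log (A 0 ω) ∂P < 0)
    (hlogB_int : Integrable (fun ω => max 0 (Real.log |B 0 ω|)) P) :
    ∀ᵐ ω ∂P, Summable fun n : ℕ => |(∏ i ∈ Finset.range n, A i ω) * B n ω| := by
  letI : MeasureSpace Ω := ⟨P⟩
  set μ0 := ∫ ω, Real.log (A 0 ω) ∂P with hμ0
  set β : ℝ := -μ0 / 4 with hβdef
  have hβ : 0 < β := by simp only [hβdef]; linarith
  -- Strong law of large numbers for `log ∘ A`.
  have hident : ∀ n, ProbabilityTheory.IdentDistrib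
      (fun ω => Real.log (A n ω)) (fun ω => Real.log (A 0 ω)) P P := fun n =>
    ProbabilityTheory.IdentDistrib.comp
      ⟨(hA_meas n).aemeasurable, (hA_meas 0).aemeasurable, hA_id n⟩ Real.measurable_log
  have hpair : Pairwise (Function.onFun (ProbabilityTheory.IndepFun · · P)
      fun n ω => Real.log (A n ω)) := by
    intro i j hij
    have h1 : ProbabilityTheory.IndepFun (A i) (A j) P :=
      hindep.indepFun (i := Sum.inl i) (j := Sum.inl j) (by simpa using hij)
    exact h1.comp Real.measurable_log Real.measurable_log
  have hslln := ProbabilityTheory.strong_law_ae_real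
    (fun n ω => Real.log (A n ω)) hlogA_int hpair hident
  -- Borel–Cantelli for `B`.
  set Z : Ω → ℝ := fun ω => β⁻¹ * max 0 (Real.log |B 0 ω|) with hZdef
  have hZint : Integrable Z P := hlogB_int.const_mul _
  have hZnonneg : 0 ≤ Z := fun ω => by
    have : (0:ℝ) ≤ max 0 (Real.log |B 0 ω|) := le_max_left _ _
    positivity
  have htsum : (∑' j : ℕ, P {ω | Z ω ∈ Set.Ioi (j : ℝ)}) < ⊤ :=
    ProbabilityTheory.tsum_prob_mem_Ioi_lt_top hZint hZnonneg
  set s : ℕ → Set Ω := fun n =>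
    (B n) ⁻¹' {x : ℝ | β⁻¹ * max 0 (Real.log |x|) ∈ Set.Ioi (n : ℝ)} with hsdef
  have htmeas : ∀ n : ℕ, MeasurableSet
      {x : ℝ | β⁻¹ * max 0 (Real.log |x|) ∈ Set.Ioi (n : ℝ)} := fun n =>
    measurableSet_lt measurable_const
      (measurable_const.mul ((measurable_const.max
        (Real.measurable_log.comp measurable_abs))))
  have hseq : ∀ n, P (s n) = P {ω | Z ω ∈ Set.Ioi (n : ℝ)} := by
    intro n
    rw [hsdef]
    rw [← Measure.map_apply (hB_meas n) (htmeas n), hB_id n,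
      Measure.map_apply (hB_meas 0) (htmeas n)]
    rfl
  have hbc : ∀ᵐ ω ∂P, ∀ᶠ n in atTop, ω ∉ s n := by
    apply ae_eventually_notMem
    rw [tsum_congr hseq]
    exact htsum.ne
  filter_upwards [hslln, hbc] with ω hω1 hω2
  have hev1 : ∀ᶠ n : ℕ in atTop,
      (∑ i ∈ Finset.range n, Real.log (A i ω)) / n < μ0 / 2 :=
    hω1.eventually_lt_const (by linarith)
  have hev : ∀ᶠ n : ℕ in cofinite,
      ‖|(∏ i ∈ Finset.range n, A i ω) * B n ω|‖ ≤ (Real.exp (μ0 / 4)) ^ n := by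
    rw [Nat.cofinite_eq_atTop]
    filter_upwards [hev1, hω2, eventually_ge_atTop 1] with n h1 h2 hn1
    have hnpos : (0:ℝ) < n := by exact_mod_cast hn1
    -- bound on the product
    have hSn : (∑ i ∈ Finset.range n, Real.log (A i ω)) ≤ μ0 / 2 * n := by
      have := (div_lt_iff₀ hnpos).1 h1
      linarith
    have hprod : (∏ i ∈ Finset.range n, A i ω)
        = Real.exp (∑ i ∈ Finset.range n, Real.log (A i ω)) := by
      rw [Real.exp_sum]
      exact Finset.prod_congr rfl fun i _ => (Real.exp_log (hA_pos i ω)).symm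
    -- bound on B
    have hB1 : max 0 (Real.log |B n ω|) ≤ β * n := by
      simp only [hsdef, Set.mem_preimage, Set.mem_setOf_eq, Set.mem_Ioi, not_lt] at h2
      calc max 0 (Real.log |B n ω|)
          = β * (β⁻¹ * max 0 (Real.log |B n ω|)) := by
            field_simp
        _ ≤ β * n := by
            exact mul_le_mul_of_nonneg_left h2 hβ.le
    have hBb : |B n ω| ≤ Real.exp (β * n) :=
      (aux_le_exp_logplus (abs_nonneg _)).trans (Real.exp_le_exp.2 hB1)
    have hQpos : 0 < ∏ i ∈ Finset.range n, A i ω :=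
      Finset.prod_pos fun i _ => hA_pos i ω
    have hQb : (∏ i ∈ Finset.range n, A i ω) ≤ Real.exp (μ0 / 2 * n) := by
      rw [hprod]; exact Real.exp_le_exp.2 hSn
    have : |(∏ i ∈ Finset.range n, A i ω) * B n ω| ≤ Real.exp (μ0 / 4 * n) := by
      rw [abs_mul, abs_of_pos hQpos]
      calc (∏ i ∈ Finset.range n, A i ω) * |B n ω|
          ≤ Real.exp (μ0 / 2 * n) * Real.exp (β * n) :=
            mul_le_mul hQb hBb (abs_nonneg _) (Real.exp_pos _).le
        _ = Real.exp (μ0 / 4 * n) := by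
            rw [← Real.exp_add]; congr 1; simp only [hβdef]; ring
    calc ‖|(∏ i ∈ Finset.range n, A i ω) * B n ω|‖
        = |(∏ i ∈ Finset.range n, A i ω) * B n ω| := by
          rw [Real.norm_eq_abs, abs_abs]
      _ ≤ Real.exp (μ0 / 4 * n) := this
      _ = (Real.exp (μ0 / 4)) ^ n := by
          rw [← Real.exp_nat_mul]; ring_nf
  exact Summable.of_norm_bounded_eventually
    (summable_geometric_of_lt_one (Real.exp_pos _).le
      (Real.exp_lt_one_iff.2 (by linarith))) hev
end

section
/- Let (G,θ) be a measured group with 𝔼_θ[𝔪_θ] < ∞ and suppose 𝔪_θ is locally bounded. Then the family ℍ(G,θ) of positive θ-harmonic functions u with u(e)=1 is uniformly bounded and equicontinuous on every compact subset of G: for every compact C ⊆ G, sup{u(g) : u ∈ ℍ(G,θ), g ∈ C} ≤ sup_{g∈C} 𝔪_θ(g) < ∞, and |u(h) − u(hk)| ≤ M·‖𝔪_θ·(φ − kφ)‖_{L¹(G)} for all u ∈ ℍ(G,θ), h ∈ C, k ∈ G, where M = sup_{g∈C} 𝔪_θ(g), φ = dθ/dm_G and kφ(x) = φ(k⁻¹x).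 -/
open MeasureTheory ENNReal

section Aux

variable {G : Type*} [Group G] [MeasurableSpace G] {θ : Measure G}

lemma ofReal_le_majorant {u : G → ℝ} (hu : u ∈ harmCone θ) (g : G) :
    ENNReal.ofReal (u g) ≤ majorant θ g :=
  le_iSup₂ (f := fun v (_ : v ∈ harmCone θ) => ENNReal.ofReal (v g)) u hu

lemma translate_mem_harmCone [MeasurableMul G] {u : G → ℝ} (hu : u ∈ harmCone θ) (h : G) :
    (fun x => u (h * x) / u h) ∈ harmCone θ := by
  obtain ⟨hm, hpos, hharm, -⟩ := hu
  refine ⟨(hm.comp (measurable_const_mul h)).div_const _,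
    fun g => div_pos (hpos _) (hpos h), ?_, ?_⟩
  · intro g
    have e : ∀ x, u (h * (g * x)) = u ((h * g) * x) := fun x => by rw [mul_assoc]
    simp_rw [e]
    rw [integral_div, hharm (h * g)]
  · simp [div_self (hpos h).ne']

lemma integrable_translate {u : G → ℝ} (hu : u ∈ harmCone θ) (w : G) :
    Integrable (fun g => u (w * g)) θ := by
  by_contra hc
  have h0 := integral_undef hc
  rw [hu.2.2.1 w] at h0
  exact (hu.2.1 w).ne' h0

end Aux

/-- Under `𝔼_θ[𝔪_θ] < ∞` and local boundedness of `𝔪_θ`, the family `ℍ(G,θ)` is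
uniformly bounded and equicontinuous on every compact `C ⊆ G`: every `u ∈ ℍ(G,θ)` is
bounded on `C` by `M = sup_C 𝔪_θ < ∞`, and
`|u(h) − u(hk)| ≤ M·‖𝔪_θ·(φ − kφ)‖_{L¹}` for `h ∈ C`, `k ∈ G`. -/
theorem stmt_18 {G : Type*} [Group G] [TopologicalSpace G] [IsTopologicalGroup G]
    [LocallyCompactSpace G] [SecondCountableTopology G]
    [MeasurableSpace G] [BorelSpace G]
    (mG : Measure G) [mG.IsHaarMeasure]
    (φ : G → ℝ) (hφ_meas : Measurable φ) (hφ_nonneg : ∀ g, 0 ≤ φ g)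
    (θ : Measure G) [IsProbabilityMeasure θ]
    (hθ : θ = mG.withDensity fun g => ENNReal.ofReal (φ g))
    (hadm : IsAdmissible mG θ)
    (hint : ∫⁻ g, majorant θ g ∂θ < ⊤)
    (hloc : ∀ L : Set G, IsCompact L → ∃ M : ℝ, ∀ g ∈ L, majorant θ g ≤ ENNReal.ofReal M)
    (C : Set G) (hC : IsCompact C) :
    ∃ M : ℝ, (∀ g ∈ C, majorant θ g ≤ ENNReal.ofReal M) ∧
      (∀ u ∈ harmCone θ, ∀ g ∈ C, u g ≤ M) ∧
      ∀ u ∈ harmCone θ, ∀ h ∈ C, ∀ k : G,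
        ENNReal.ofReal |u h - u (h * k)| ≤
          ENNReal.ofReal M *
            ∫⁻ g, majorant θ g * ENNReal.ofReal |φ g - φ (k⁻¹ * g)| ∂mG := by
  obtain ⟨M₀, hM₀⟩ := hloc C hC
  set M : ℝ := max M₀ 0 with hMdef
  have hMnonneg : 0 ≤ M := le_max_right _ _
  have hM : ∀ g ∈ C, majorant θ g ≤ ENNReal.ofReal M :=
    fun g hg => (hM₀ g hg).trans (ENNReal.ofReal_le_ofReal (le_max_left _ _))
  refine ⟨M, hM, ?_, ?_⟩
  · intro u hu g hg
    exact (ENNReal.ofReal_le_ofReal_iff hMnonneg).mp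
      ((ofReal_le_majorant hu g).trans (hM g hg))
  intro u hu h hhC k
  obtain ⟨humeas, hupos, huharm, hu1⟩ := id hu
  -- realize θ as a density against mG, with an `ℝ≥0`-valued density
  have hθ' : θ = mG.withDensity fun g => ((φ g).toNNReal : ℝ≥0∞) := hθ
  have hfN : Measurable fun g => (φ g).toNNReal := hφ_meas.real_toNNReal
  -- key: integrability and value of the basic integrals
  have key : ∀ w : G, Integrable (fun g => u (w * g) * φ g) mG ∧
      ∫ g, u (w * g) * φ g ∂mG = u w := by
    intro w
    have hI : Integrable (fun g => u (w * g)) θ := integrable_translate hu w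
    rw [hθ'] at hI
    have h1 := (integrable_withDensity_iff_integrable_smul hfN).mp hI
    have e : (fun g => (φ g).toNNReal • u (w * g)) = fun g => u (w * g) * φ g := by
      funext g
      simp [NNReal.smul_def, Real.coe_toNNReal _ (hφ_nonneg g), mul_comm]
    have h2 : ∫ g, u (w * g) ∂θ = ∫ g, u (w * g) * φ g ∂mG := by
      rw [hθ', integral_withDensity_eq_integral_smul hfN, e]
    exact ⟨e ▸ h1, by rw [← h2, huharm w]⟩
  -- substitution g ↦ k g
  have hsub : ∫ g, u (h * g) * φ (k⁻¹ * g) ∂mG = u (h * k) := by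
    have hinv := integral_mul_left_eq_self (μ := mG)
      (fun y => u (h * y) * φ (k⁻¹ * y)) k
    rw [← hinv]
    simp only [inv_mul_cancel_left, ← mul_assoc, inv_mul_cancel, one_mul]
    exact (key (h * k)).2
  have hI2 : Integrable (fun g => u (h * g) * φ (k⁻¹ * g)) mG := by
    have := (key (h * k)).1.comp_mul_left k⁻¹
    simpa [mul_assoc, mul_inv_cancel_left] using this
  have hdiff : u h - u (h * k) = ∫ g, u (h * g) * (φ g - φ (k⁻¹ * g)) ∂mG := by
    simp_rw [mul_sub]
    rw [integral_sub (key h).1 hI2, (key h).2, hsub]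
  have hInt3 : Integrable (fun g => u (h * g) * |φ g - φ (k⁻¹ * g)|) mG := by
    have := ((key h).1.sub hI2).abs
    simpa [← mul_sub, abs_mul, abs_of_pos, hupos] using this
  have habs : |u h - u (h * k)| ≤ ∫ g, u (h * g) * |φ g - φ (k⁻¹ * g)| ∂mG := by
    rw [hdiff]
    calc |∫ g, u (h * g) * (φ g - φ (k⁻¹ * g)) ∂mG|
        ≤ ∫ g, |u (h * g)| * |φ g - φ (k⁻¹ * g)| ∂mG := by
          simpa [Real.norm_eq_abs, abs_mul] using
            norm_integral_le_integral_norm (fun g => u (h * g) * (φ g - φ (k⁻¹ * g))) (μ := mG)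
      _ = ∫ g, u (h * g) * |φ g - φ (k⁻¹ * g)| ∂mG := by
          congr 1; funext g; rw [abs_of_pos (hupos _)]
  have hof : ENNReal.ofReal (∫ g, u (h * g) * |φ g - φ (k⁻¹ * g)| ∂mG)
      = ∫⁻ g, ENNReal.ofReal (u (h * g) * |φ g - φ (k⁻¹ * g)|) ∂mG :=
    ofReal_integral_eq_lintegral_ofReal hInt3
      (Filter.Eventually.of_forall fun g => mul_nonneg (hupos _).le (abs_nonneg _))
  have hpt : ∀ g : G, ENNReal.ofReal (u (h * g)) ≤ ENNReal.ofReal M * majorant θ g := by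
    intro g
    have hv := translate_mem_harmCone hu h
    have h1 : ENNReal.ofReal (u h) ≤ ENNReal.ofReal M :=
      (ofReal_le_majorant hu h).trans (hM h hhC)
    have h2 : ENNReal.ofReal (u (h * g) / u h) ≤ majorant θ g := ofReal_le_majorant hv g
    calc ENNReal.ofReal (u (h * g))
        = ENNReal.ofReal (u h * (u (h * g) / u h)) := by
          rw [mul_div_cancel₀ _ (hupos h).ne']
      _ = ENNReal.ofReal (u h) * ENNReal.ofReal (u (h * g) / u h) :=
          ENNReal.ofReal_mul (hupos h).le
      _ ≤ ENNReal.ofReal M * majorant θ g := mul_le_mul' h1 h2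
  calc ENNReal.ofReal |u h - u (h * k)|
      ≤ ENNReal.ofReal (∫ g, u (h * g) * |φ g - φ (k⁻¹ * g)| ∂mG) :=
        ENNReal.ofReal_le_ofReal habs
    _ = ∫⁻ g, ENNReal.ofReal (u (h * g) * |φ g - φ (k⁻¹ * g)|) ∂mG := hof
    _ = ∫⁻ g, ENNReal.ofReal (u (h * g)) * ENNReal.ofReal (|φ g - φ (k⁻¹ * g)|) ∂mG := by
        simp_rw [ENNReal.ofReal_mul (hupos _).le]
    _ ≤ ∫⁻ g, (ENNReal.ofReal M * majorant θ g) * ENNReal.ofReal (|φ g - φ (k⁻¹ * g)|) ∂mG :=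
        lintegral_mono fun g => mul_le_mul_left (hpt g) _
    _ = ∫⁻ g, ENNReal.ofReal M * (majorant θ g * ENNReal.ofReal (|φ g - φ (k⁻¹ * g)|)) ∂mG := by
        simp_rw [mul_assoc]
    _ = ENNReal.ofReal M * ∫⁻ g, majorant θ g * ENNReal.ofReal (|φ g - φ (k⁻¹ * g)|) ∂mG :=
        lintegral_const_mul' _ _ ENNReal.ofReal_ne_top
end
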